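/- arXiv:2001.11647 — 2 statements merged into one kernel-verified Lean document; each statement's English description precedes it below -/
import Mathlib

section
/- For every integer vector v = (v_1,…,v_r) with 0 ≤ v_r < v_{r−1} < ⋯ < v_1 < r+k, one has Σ_{μ∈P_k} S_μ(ζ_v)·S_{μ*}(ζ_v) = exp(2πik|v|/(r+k)) · k(r+k)^{r−1} / D(v). -/
open scoped BigOperators
open Complex

noncomputable section

namespace VerlindePaper

/-- The Schur value `S_λ(z₁,…,z_r) = det(z_j^{λ_i+r-i}) / det(z_j^{r-i})`
(indices `i` are 0-based, so the exponent is `λ i + (r - 1 - i)`). -/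
noncomputable def schur {r : ℕ} (lam : Fin r → ℤ) (z : Fin r → ℂ) : ℂ :=
  Matrix.det (Matrix.of fun i j : Fin r => z j ^ (lam i + ((r : ℤ) - 1 - (i : ℕ)))) /
    Matrix.det (Matrix.of fun i j : Fin r => z j ^ ((r : ℤ) - 1 - (i : ℕ)))

/-- `ζ_v = (e^{2πi v_1/(r+k)}, …, e^{2πi v_r/(r+k)})`. -/
noncomputable def zeta (r k : ℕ) (v : Fin r → ℤ) : Fin r → ℂ :=
  fun j => Complex.exp (2 * (Real.pi : ℂ) * Complex.I * (v j : ℂ) / ((r : ℂ) + (k : ℂ)))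

/-- `D(v) = ∏_{i<j} (2 sin(π(v_i - v_j)/(r+k)))²`. -/
noncomputable def Dv (r k : ℕ) (v : Fin r → ℤ) : ℝ :=
  ∏ p ∈ Finset.univ.filter (fun p : Fin r × Fin r => p.1 < p.2),
    (2 * Real.sin (Real.pi * ((v p.1 : ℝ) - (v p.2 : ℝ)) / ((r : ℝ) + (k : ℝ)))) ^ 2

/-- `P̄_k = {μ : 0 ≤ μ_r ≤ ⋯ ≤ μ_1 ≤ k}` (0-based: `μ 0 = μ_1`). -/
def Pbar (r k : ℕ) : Finset (Fin r → ℤ) :=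
  (Finset.Icc 0 (fun _ => (k : ℤ))).filter (fun μ => ∀ i j : Fin r, i ≤ j → μ j ≤ μ i)

/-- `P_k = {μ : 0 ≤ μ_r ≤ ⋯ ≤ μ_1 ≤ k-1}`. -/
def Pk (r k : ℕ) : Finset (Fin r → ℤ) :=
  (Finset.Icc 0 (fun _ => (k : ℤ) - 1)).filter (fun μ => ∀ i j : Fin r, i ≤ j → μ j ≤ μ i)

/-- `W_k = {μ ∈ P̄_k : μ_r = 0}`. -/
def Wk (r k : ℕ) : Finset (Fin r → ℤ) :=
  (Pbar r k).filter (fun μ => ∀ i : Fin r, (i : ℕ) = r - 1 → μ i = 0)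

/-- `μ* = (k - μ_r, k - μ_{r-1}, …, k - μ_1)`. -/
def mustar (k : ℕ) {r : ℕ} (μ : Fin r → ℤ) : Fin r → ℤ :=
  fun i => (k : ℤ) - μ i.rev

/-- `μ ∼ ν` iff `μ - ν` is a constant vector. -/
def sim {r : ℕ} (μ ν : Fin r → ℤ) : Prop := ∃ a : ℤ, ∀ i, μ i = ν i + a

/-- The index set of the Verlinde sums: integer vectors with
`0 = v_r < v_{r-1} < ⋯ < v_1 < r + k`. -/
def Vset (r k : ℕ) : Finset (Fin r → ℤ) :=
  (Finset.Icc 0 (fun _ => (r : ℤ) + (k : ℤ) - 1)).filter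
    (fun v => (∀ i j : Fin r, i < j → v j < v i) ∧ ∀ i : Fin r, (i : ℕ) = r - 1 → v i = 0)

/-- The Verlinde number `V_g(r,d,(λ_x)_{x∈I})`. -/
noncomputable def verlinde (r k : ℕ) (g : ℕ) (d : ℤ) {I : Type*} [Fintype I]
    (lam : I → Fin r → ℤ) : ℂ :=
  (-1 : ℂ) ^ (d * ((r : ℤ) - 1)) * ((k : ℂ) / (r : ℂ)) ^ g *
    ((r : ℂ) * ((r : ℂ) + (k : ℂ)) ^ (r - 1)) ^ ((g : ℤ) - 1) *
    ∑ v ∈ Vset r k,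
      Complex.exp (2 * (Real.pi : ℂ) * Complex.I *
          ((d : ℂ) / (r : ℂ) -
            (∑ x, ∑ i, (lam x i : ℂ)) / ((r : ℂ) * ((r : ℂ) + (k : ℂ)))) *
          (∑ i, (v i : ℂ))) *
        (∏ x, schur (lam x) (zeta r k v)) * ((Dv r k v : ℂ)) ^ (1 - (g : ℤ))

/-- The Hecke transformation
`H¹(μ) = (k - μ_{r-1} + μ_r, μ_1 - μ_{r-1}, …, μ_{r-2} - μ_{r-1}, 0)`. -/
def H1 (k : ℕ) {r : ℕ} (μ : Fin r → ℤ) : Fin r → ℤ := fun j =>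
  have hj : (j : ℕ) < r := j.isLt
  if (j : ℕ) = 0 then (k : ℤ) - μ ⟨r - 2, by omega⟩ + μ ⟨r - 1, by omega⟩
  else μ ⟨(j : ℕ) - 1, by omega⟩ - μ ⟨r - 2, by omega⟩

/-- The iterated Hecke transformation `H^m = H¹ ∘ ⋯ ∘ H¹`. -/
def Hm (k : ℕ) {r : ℕ} (m : ℕ) (μ : Fin r → ℤ) : Fin r → ℤ := (H1 k)^[m] μ

/-- `μ ∈ Y(λ, ω_s)`: `μ` is a partition obtained from `λ` by adding `s` boxes,
no two in the same row. -/
def inY {r : ℕ} (lam : Fin r → ℤ) (s : ℕ) (μ : Fin r → ℤ) : Prop :=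
  (∀ i j : Fin r, i ≤ j → μ j ≤ μ i) ∧ (∀ i, μ i - lam i = 0 ∨ μ i - lam i = 1) ∧
    (∑ i, μ i) = (∑ i, lam i) + (s : ℤ)

/-- The Vandermonde product `Δ(z) = ∏_{i<j} (z_i - z_j)`. -/
noncomputable def vand {r : ℕ} (z : Fin r → ℂ) : ℂ :=
  ∏ p ∈ Finset.univ.filter (fun p : Fin r × Fin r => p.1 < p.2), (z p.1 - z p.2)

/-- `J_v(t) = Σ_{τ ∈ S_r} sgn(τ) exp(2πi (Σ_j v_{τ(j)} t_j)/(r+k))`. -/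
noncomputable def Jv (r k : ℕ) (v : Fin r → ℤ) (t : Fin r → Fin (r + k)) : ℂ :=
  ∑ τ : Equiv.Perm (Fin r), ((Equiv.Perm.sign τ : ℤ) : ℂ) *
    Complex.exp (2 * (Real.pi : ℂ) * Complex.I *
      (∑ j, (v (τ j) : ℂ) * ((t j : ℕ) : ℂ)) / ((r : ℂ) + (k : ℂ)))


section AuxProof


/-- exponent vector of a partition -/
def emu {r : ℕ} (μ : Fin r → ℤ) : Fin r → ℤ := fun i => μ i + ((r : ℤ) - 1 - (i : ℕ))

noncomputable def Fdet (r k : ℕ) (v : Fin r → ℤ) (t : Fin r → ℤ) : ℂ :=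
  Matrix.det (Matrix.of fun i j : Fin r => zeta r k v j ^ t i)

variable (r k : ℕ) (v : Fin r → ℤ)

lemma zeta_ne_zero (j : Fin r) : zeta r k v j ≠ 0 := Complex.exp_ne_zero _

lemma zeta_zpow (j : Fin r) (m : ℤ) :
    zeta r k v j ^ m =
      Complex.exp (2 * (Real.pi : ℂ) * Complex.I * ((m : ℂ) * (v j : ℂ)) / ((r : ℂ) + (k : ℂ))) := by
  rw [zeta, ← Complex.exp_int_mul]
  congr 1
  ring

lemma ncast_ne_zero (hrk : r + k ≠ 0) : ((r : ℂ) + (k : ℂ)) ≠ 0 := by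
  have : ((r + k : ℕ) : ℂ) ≠ 0 := Nat.cast_ne_zero.2 hrk
  push_cast at this ⊢; exact this

lemma zeta_zpow_n (hrk : r + k ≠ 0) (j : Fin r) :
    zeta r k v j ^ ((r : ℤ) + (k : ℤ)) = 1 := by
  have hn : ((r : ℂ) + (k : ℂ)) ≠ 0 := ncast_ne_zero r k hrk
  rw [zeta_zpow]
  have : 2 * (Real.pi : ℂ) * Complex.I * ((((r : ℤ) + (k : ℤ) : ℤ) : ℂ) * (v j : ℂ)) /
      ((r : ℂ) + (k : ℂ)) = (v j : ℂ) * (2 * (Real.pi : ℂ) * Complex.I) := by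
    push_cast
    field_simp
  rw [this, Complex.exp_int_mul_two_pi_mul_I]

lemma zeta_conj (j : Fin r) : (starRingEnd ℂ) (zeta r k v j) = (zeta r k v j)⁻¹ := by
  rw [zeta, ← Complex.exp_conj, ← Complex.exp_neg]
  congr 1
  simp [map_div₀, map_mul, Complex.conj_I, Complex.conj_ofReal, map_ofNat]
  ring

lemma zeta_injective (hrk : r + k ≠ 0) (hdec : ∀ i j : Fin r, i < j → v j < v i)
    (hlow : ∀ i, 0 ≤ v i) (hhigh : ∀ i, v i < (r : ℤ) + (k : ℤ)) :
    Function.Injective (zeta r k v) := by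
  intro a b hab
  have hn : ((r : ℂ) + (k : ℂ)) ≠ 0 := ncast_ne_zero r k hrk
  have hpi : (Real.pi : ℂ) ≠ 0 := by exact_mod_cast Real.pi_ne_zero
  rw [zeta, zeta, Complex.exp_eq_exp_iff_exists_int] at hab
  obtain ⟨m, hm⟩ := hab
  have h2 : (2 * (Real.pi : ℂ) * Complex.I) ≠ 0 := by
    simp [hpi, Complex.I_ne_zero]
  have key : (v a : ℂ) = (v b : ℂ) + (m : ℂ) * ((r : ℂ) + (k : ℂ)) := by
    field_simp at hm
    refine mul_left_cancel₀ h2 ?_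
    linear_combination (2 * (Real.pi : ℂ) * Complex.I) * hm
  have hz : v a = v b + m * ((r : ℤ) + (k : ℤ)) := by exact_mod_cast key
  have hn' : (0:ℤ) < (r:ℤ) + (k:ℤ) := by
    have := (hlow a).trans_lt (hhigh a); omega
  have h1 := hlow a; have h2 := hlow b; have h3 := hhigh a; have h4 := hhigh b
  have hm1 : m < 1 := by nlinarith
  have hm2 : (-1:ℤ) < m := by nlinarith
  have hm0 : m = 0 := by omega
  rw [hm0] at hz
  have hv : v a = v b := by omega
  by_contra hne
  rcases lt_or_gt_of_ne hne with h | h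
  · exact absurd hv (by have := hdec a b h; omega)
  · exact absurd hv (by have := hdec b a h; omega)

section part2
variable (r k : ℕ) (v : Fin r → ℤ)

lemma Fdet_perm (σ : Equiv.Perm (Fin r)) (t : Fin r → ℤ) :
    Fdet r k v (t ∘ σ) = ((Equiv.Perm.sign σ : ℤ) : ℂ) * Fdet r k v t := by
  have h : (Matrix.of fun i j : Fin r => zeta r k v j ^ (t ∘ σ) i) =
      (Matrix.of fun i j : Fin r => zeta r k v j ^ t i).submatrix σ id := rfl
  rw [Fdet, h, Matrix.det_permute, Fdet]

lemma Fdet_add_const (c : ℤ) (t : Fin r → ℤ) :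
    Fdet r k v (fun i => t i + c) = (∏ j, zeta r k v j ^ c) * Fdet r k v t := by
  have h : (Matrix.of fun i j : Fin r => zeta r k v j ^ (t i + c)) =
      Matrix.of fun i j : Fin r => (zeta r k v j ^ c) * (Matrix.of fun i j : Fin r => zeta r k v j ^ t i) i j := by
    ext i j
    simp only [Matrix.of_apply]
    rw [zpow_add₀ (zeta_ne_zero r k v j)]
    ring
  rw [Fdet, h, Matrix.det_mul_row]
  rfl

lemma Fdet_neg (t : Fin r → ℤ) :
    Fdet r k v (fun i => - t i) = (starRingEnd ℂ) (Fdet r k v t) := by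
  rw [Fdet, Fdet, RingHom.map_det]
  congr 1
  ext i j
  simp only [RingHom.mapMatrix_apply, Matrix.map_apply, Matrix.of_apply]
  rw [map_zpow₀, zeta_conj, inv_zpow, ← zpow_neg]

lemma Fdet_eq_zero_of_not_inj (t : Fin r → ℤ) (h : ¬ Function.Injective t) :
    Fdet r k v t = 0 := by
  rw [Function.not_injective_iff] at h
  obtain ⟨a, b, hab, hne⟩ := h
  refine Matrix.det_zero_of_row_eq hne ?_
  funext j
  simp only [Matrix.of_apply, hab]

lemma Fdet_id_eq :
    Fdet r k v (fun i => ((i : ℕ) : ℤ)) =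
      ∏ i : Fin r, ∏ j ∈ Finset.Ioi i, (zeta r k v j - zeta r k v i) := by
  have h : (Matrix.of fun i j : Fin r => zeta r k v j ^ ((i : ℕ) : ℤ)) =
      Matrix.transpose (Matrix.vandermonde (zeta r k v)) := by
    ext i j
    simp [Matrix.vandermonde, zpow_natCast]
  rw [Fdet, h, Matrix.det_transpose, Matrix.det_vandermonde]

lemma Fdet_id_ne_zero (hrk : r + k ≠ 0) (hdec : ∀ i j : Fin r, i < j → v j < v i)
    (hlow : ∀ i, 0 ≤ v i) (hhigh : ∀ i, v i < (r : ℤ) + (k : ℤ)) :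
    Fdet r k v (fun i => ((i : ℕ) : ℤ)) ≠ 0 := by
  rw [Fdet_id_eq]
  refine Finset.prod_ne_zero_iff.2 ?_
  intro i _
  refine Finset.prod_ne_zero_iff.2 ?_
  intro j hj
  have hij : i < j := Finset.mem_Ioi.1 hj
  exact sub_ne_zero.2 fun hz =>
    (ne_of_lt hij) ((zeta_injective r k v hrk hdec hlow hhigh hz).symm)

end part2
section part3
variable (r k : ℕ) (v : Fin r → ℤ)

lemma mem_Pk_iff {μ : Fin r → ℤ} :
    μ ∈ Pk r k ↔ (∀ i, 0 ≤ μ i ∧ μ i ≤ (k : ℤ) - 1) ∧ (∀ i j : Fin r, i ≤ j → μ j ≤ μ i) := by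
  simp only [Pk, Finset.mem_filter, Finset.mem_Icc, Pi.le_def, Pi.zero_apply, and_congr_left_iff]
  intro _
  constructor
  · rintro ⟨h1, h2⟩ i; exact ⟨h1 i, h2 i⟩
  · intro h; exact ⟨fun i => (h i).1, fun i => (h i).2⟩

lemma emu_bounds {μ : Fin r → ℤ} (hμ : μ ∈ Pk r k) (i : Fin r) :
    0 ≤ emu μ i ∧ emu μ i ≤ (r : ℤ) + (k : ℤ) - 2 := by
  obtain ⟨h1, _⟩ := (mem_Pk_iff r k).1 hμ
  have hi := i.isLt
  have := h1 i
  unfold emu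
  omega

lemma emu_strictAnti {μ : Fin r → ℤ} (hμ : μ ∈ Pk r k) : StrictAnti (emu μ) := by
  obtain ⟨_, h2⟩ := (mem_Pk_iff r k).1 hμ
  intro i j hij
  have := h2 i j (le_of_lt hij)
  have hij' : (i : ℕ) < (j : ℕ) := hij
  have hj := j.isLt
  unfold emu
  omega

lemma strictMono_fin_shift {f : Fin r → ℤ} (hf : StrictMono f) :
    ∀ a b : Fin r, a ≤ b → f a + ((b : ℕ) : ℤ) ≤ f b + ((a : ℕ) : ℤ) := by
  have key : ∀ d : ℕ, ∀ a b : Fin r, (b : ℕ) = (a : ℕ) + d →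
      f a + ((b : ℕ) : ℤ) ≤ f b + ((a : ℕ) : ℤ) := by
    intro d
    induction d with
    | zero =>
      intro a b h
      have : a = b := Fin.ext (by omega)
      subst this; omega
    | succ d ih =>
      intro a b h
      have hb' : (a : ℕ) + d < r := by have := b.isLt; omega
      have h1 := ih a ⟨(a : ℕ) + d, hb'⟩ rfl
      have h2 : f ⟨(a : ℕ) + d, hb'⟩ < f b := hf (by rw [Fin.lt_def]; simp; omega)
      simp only [Fin.val_mk] at h1 h2 ⊢
      push_cast at h1 ⊢
      omega
  intro a b hab
  exact key ((b : ℕ) - (a : ℕ)) a b (by have := (Fin.le_def.1 hab); omega)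

lemma fin_strictMono_le {f : Fin r → Fin r} (hf : StrictMono f) :
    ∀ i : Fin r, (i : ℕ) ≤ ((f i) : ℕ) := by
  intro i
  have h0 : 0 < r := lt_of_le_of_lt (Nat.zero_le _) i.isLt
  have hg : StrictMono (fun j : Fin r => (((f j) : ℕ) : ℤ)) := by
    intro a b hab
    simp only []
    exact_mod_cast hf hab
  have := strictMono_fin_shift r (f := fun j : Fin r => (((f j) : ℕ) : ℤ)) hg ⟨0, h0⟩ i
    (by rw [Fin.le_def]; exact Nat.zero_le _)
  simp only [Fin.val_mk] at this
  have h1 : (0:ℤ) ≤ ((f ⟨0, h0⟩ : ℕ) : ℤ) := by positivity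
  omega

lemma perm_strictMono_eq {q : Equiv.Perm (Fin r)} (h : StrictMono ⇑q) : ∀ i, q i = i := by
  have hinv : StrictMono ⇑q.symm := by
    intro a b hab
    rcases lt_trichotomy (q.symm a) (q.symm b) with hc | hc | hc
    · exact hc
    · exfalso; have : a = b := by
        have := congrArg q (congrArg id hc)
        simpa using this
      exact (ne_of_lt hab) this
    · exfalso
      have := h hc
      simp only [Equiv.apply_symm_apply] at this
      exact absurd hab (not_lt_of_gt this)
  intro i
  have h1 := fin_strictMono_le r h i
  have h2 := fin_strictMono_le r hinv (q i)
  simp only [Equiv.symm_apply_apply] at h2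
  exact Fin.ext (le_antisymm h2 h1)

end part3
section part4
variable (r k : ℕ) (v : Fin r → ℤ)

def Box (r k : ℕ) : Finset (Fin r → ℤ) :=
  Fintype.piFinset (fun _ : Fin r => Finset.Icc (0 : ℤ) ((r : ℤ) + (k : ℤ) - 2))

lemma sign_sq (σ : Equiv.Perm (Fin r)) :
    (((Equiv.Perm.sign σ : ℤ) : ℂ)) * (((Equiv.Perm.sign σ : ℤ) : ℂ)) = 1 := by
  have h := Int.units_mul_self (Equiv.Perm.sign σ)
  have h2 : ((Equiv.Perm.sign σ : ℤ) * (Equiv.Perm.sign σ : ℤ) : ℤ) = 1 := by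
    rw [← Units.val_mul, h]; rfl
  exact_mod_cast congrArg (fun z : ℤ => (z : ℂ)) h2

lemma conj_sign (σ : Equiv.Perm (Fin r)) :
    (starRingEnd ℂ) ((Equiv.Perm.sign σ : ℤ) : ℂ) = ((Equiv.Perm.sign σ : ℤ) : ℂ) := by
  simp

lemma sum_box_eq (hr : 1 ≤ r) :
    ∑ t ∈ Box r k, Fdet r k v t * (starRingEnd ℂ) (Fdet r k v t) =
      (r.factorial : ℂ) *
        ∑ μ ∈ Pk r k, Fdet r k v (emu μ) * (starRingEnd ℂ) (Fdet r k v (emu μ)) := by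
  classical
  rw [← Finset.sum_filter_add_sum_filter_not (Box r k) (fun t => Function.Injective t)]
  have hzero : ∑ t ∈ (Box r k).filter (fun t => ¬ Function.Injective t),
      Fdet r k v t * (starRingEnd ℂ) (Fdet r k v t) = 0 := by
    refine Finset.sum_eq_zero ?_
    intro t ht
    rw [Fdet_eq_zero_of_not_inj r k v t (Finset.mem_filter.1 ht).2, zero_mul]
  rw [hzero, add_zero]
  have hbij : ∑ p ∈ (Pk r k) ×ˢ (Finset.univ : Finset (Equiv.Perm (Fin r))),
      Fdet r k v (emu p.1 ∘ p.2) * (starRingEnd ℂ) (Fdet r k v (emu p.1 ∘ p.2)) =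
      ∑ t ∈ (Box r k).filter (fun t => Function.Injective t),
        Fdet r k v t * (starRingEnd ℂ) (Fdet r k v t) := by
    refine Finset.sum_bij (fun p _ => emu p.1 ∘ p.2) ?_ ?_ ?_ ?_
    · -- maps into target
      rintro ⟨μ, π⟩ hp
      have hμ : μ ∈ Pk r k := (Finset.mem_product.1 hp).1
      rw [Finset.mem_filter]
      constructor
      · rw [Box, Fintype.mem_piFinset]
        intro i
        rw [Finset.mem_Icc]
        exact emu_bounds r k hμ (π i)
      · exact ((emu_strictAnti r k hμ).injective).comp π.injective
    · -- injective
      rintro ⟨μ, π⟩ hp ⟨ν, ρ⟩ hq h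
      have hμ : μ ∈ Pk r k := (Finset.mem_product.1 hp).1
      have hν : ν ∈ Pk r k := (Finset.mem_product.1 hq).1
      have hpt : ∀ i, emu μ (π i) = emu ν (ρ i) := fun i => congrFun h i
      have hq' : ∀ j, emu μ (π (ρ.symm j)) = emu ν j := by
        intro j
        have := hpt (ρ.symm j)
        simpa using this
      have hsm : StrictMono (fun j => π (ρ.symm j)) := by
        intro a b hab
        have h1 : emu ν b < emu ν a := emu_strictAnti r k hν hab
        rw [← hq' a, ← hq' b] at h1
        exact ((emu_strictAnti r k hμ).lt_iff_gt).1 h1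
      have hid := perm_strictMono_eq r (q := ρ.symm.trans π) hsm
      have hπρ : π = ρ := by
        refine Equiv.ext fun x => ?_
        have := hid (ρ x)
        simpa using this
      subst hπρ
      have hμν : μ = ν := by
        funext x
        have := hpt (π.symm x)
        simp only [Equiv.apply_symm_apply] at this
        unfold emu at this
        omega
      simp [hμν]
    · -- surjective
      intro t ht
      obtain ⟨htbox, htinj⟩ := Finset.mem_filter.1 ht
      have hbox : ∀ i, 0 ≤ t i ∧ t i ≤ (r : ℤ) + (k : ℤ) - 2 := by
        intro i
        have := (Fintype.mem_piFinset).1 htbox i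
        exact Finset.mem_Icc.1 this
      set σ := Tuple.sort t with hσ
      have hmono : Monotone (t ∘ ⇑σ) := Tuple.monotone_sort t
      have hsm : StrictMono (t ∘ ⇑σ) :=
        hmono.strictMono_of_injective (htinj.comp σ.injective)
      set u : Fin r → ℤ := t ∘ ⇑σ with hu
      set μ : Fin r → ℤ := fun j => u j.rev - ((j.rev : ℕ) : ℤ) with hμdef
      have hμPk : μ ∈ Pk r k := by
        rw [mem_Pk_iff]
        constructor
        · intro j
          constructor
          · have h0 : (0:ℕ) < r := hr
            have := strictMono_fin_shift r hsm ⟨0, h0⟩ j.rev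
              (by rw [Fin.le_def]; exact Nat.zero_le _)
            have hb := (hbox (σ ⟨0, h0⟩)).1
            simp only [Fin.val_mk] at this
            simp only [hμdef]
            have : (0:ℤ) ≤ u ⟨0,h0⟩ := hb
            have h2 := strictMono_fin_shift r hsm ⟨0, h0⟩ j.rev
              (by rw [Fin.le_def]; exact Nat.zero_le _)
            simp only [Fin.val_mk] at h2
            omega
          · have hlast : (r - 1 : ℕ) < r := by omega
            have h2 := strictMono_fin_shift r hsm j.rev ⟨r - 1, hlast⟩
              (by rw [Fin.le_def]; simp only [Fin.val_mk]; have := j.rev.isLt; omega)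
            have hb := (hbox (σ ⟨r - 1, hlast⟩)).2
            simp only [Fin.val_mk] at h2
            simp only [hμdef]
            have hbu : u ⟨r-1, hlast⟩ ≤ (r : ℤ) + (k : ℤ) - 2 := hb
            have hjr := j.rev.isLt
            omega
        · intro i j hij
          have hrev : j.rev ≤ i.rev := by
            rw [Fin.le_def, Fin.val_rev, Fin.val_rev]
            have := Fin.le_def.1 hij
            omega
          have h2 := strictMono_fin_shift r hsm j.rev i.rev hrev
          simp only [hμdef]
          omega
      refine ⟨(μ, (σ.symm).trans Fin.revPerm), Finset.mem_product.2 ⟨hμPk, Finset.mem_univ _⟩, ?_⟩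
      funext i
      simp only [Function.comp_apply, Equiv.trans_apply, Fin.revPerm_apply]
      have hrr : (σ.symm i).rev.rev = σ.symm i := Fin.rev_rev _
      have : emu μ ((σ.symm i).rev) = u (σ.symm i) := by
        unfold emu
        simp only [hμdef, hrr]
        have h1 := ((σ.symm i).rev).isLt
        have h2 := (σ.symm i).isLt
        rw [Fin.val_rev]
        omega
      rw [this]
      simp only [hu, Function.comp_apply, Equiv.apply_symm_apply]
    · -- value equality
      rintro ⟨μ, π⟩ hp
      rfl
  rw [← hbij, Finset.sum_product]
  rw [Finset.mul_sum]
  refine Finset.sum_congr rfl ?_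
  intro μ hμ
  have hterm : ∀ π : Equiv.Perm (Fin r),
      Fdet r k v (emu μ ∘ π) * (starRingEnd ℂ) (Fdet r k v (emu μ ∘ π)) =
      Fdet r k v (emu μ) * (starRingEnd ℂ) (Fdet r k v (emu μ)) := by
    intro π
    rw [Fdet_perm, map_mul, conj_sign]
    have h := sign_sq r π
    linear_combination (Fdet r k v (emu μ) * (starRingEnd ℂ) (Fdet r k v (emu μ))) * h
  rw [Finset.sum_congr rfl (fun π _ => hterm π)]
  rw [Finset.sum_const, Finset.card_univ, Fintype.card_perm]
  simp [nsmul_eq_mul]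

end part4
section part5
variable (r k : ℕ) (v : Fin r → ℤ)

local notation "ε" σ => ((Equiv.Perm.sign σ : ℤ) : ℂ)

lemma double_perm_sum (C : Matrix (Fin r) (Fin r) ℂ) :
    ∑ σ : Equiv.Perm (Fin r), ∑ τ : Equiv.Perm (Fin r),
      ((Equiv.Perm.sign σ : ℤ) : ℂ) * ((Equiv.Perm.sign τ : ℤ) : ℂ) *
        ∏ i, C (σ.symm i) (τ.symm i) =
      (r.factorial : ℂ) * Matrix.det C := by
  classical
  have hinv : ∀ σ : Equiv.Perm (Fin r), (σ⁻¹).symm = σ := fun σ => rfl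
  -- reindex σ ↦ σ⁻¹ and τ ↦ τ⁻¹
  have e1 : ∑ σ : Equiv.Perm (Fin r), ∑ τ : Equiv.Perm (Fin r),
      ((Equiv.Perm.sign σ : ℤ) : ℂ) * ((Equiv.Perm.sign τ : ℤ) : ℂ) *
        ∏ i, C (σ.symm i) (τ.symm i) =
      ∑ σ : Equiv.Perm (Fin r), ∑ τ : Equiv.Perm (Fin r),
      ((Equiv.Perm.sign σ : ℤ) : ℂ) * ((Equiv.Perm.sign τ : ℤ) : ℂ) *
        ∏ i, C (σ i) (τ i) := by
    rw [← Equiv.sum_comp (Equiv.inv (Equiv.Perm (Fin r)))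
      (fun σ => ∑ τ : Equiv.Perm (Fin r), ((Equiv.Perm.sign σ : ℤ) : ℂ) *
        ((Equiv.Perm.sign τ : ℤ) : ℂ) * ∏ i, C (σ i) (τ i))]
    refine Finset.sum_congr rfl ?_
    intro σ _
    rw [← Equiv.sum_comp (Equiv.inv (Equiv.Perm (Fin r)))
      (fun τ => ((Equiv.Perm.sign ((Equiv.inv (Equiv.Perm (Fin r))) σ) : ℤ) : ℂ) *
        ((Equiv.Perm.sign τ : ℤ) : ℂ) * ∏ i, C (((Equiv.inv (Equiv.Perm (Fin r))) σ) i) (τ i))]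
    refine Finset.sum_congr rfl ?_
    intro τ _
    simp only [Equiv.inv_apply, Equiv.Perm.sign_inv]
    congr 1
  rw [e1]
  -- now for fixed σ, reindex τ ↦ τ * σ
  have e2 : ∀ σ : Equiv.Perm (Fin r), ∑ τ : Equiv.Perm (Fin r),
      ((Equiv.Perm.sign σ : ℤ) : ℂ) * ((Equiv.Perm.sign τ : ℤ) : ℂ) *
        ∏ i, C (σ i) (τ i) =
      ((Equiv.Perm.sign σ : ℤ) : ℂ) * ((Equiv.Perm.sign σ : ℤ) : ℂ) *
        ∑ τ : Equiv.Perm (Fin r), ((Equiv.Perm.sign τ : ℤ) : ℂ) * ∏ i, C i (τ i) := by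
    intro σ
    rw [← Equiv.sum_comp (Equiv.mulRight σ)
      (fun τ => ((Equiv.Perm.sign σ : ℤ) : ℂ) * ((Equiv.Perm.sign τ : ℤ) : ℂ) *
        ∏ i, C (σ i) (τ i))]
    rw [Finset.mul_sum]
    refine Finset.sum_congr rfl ?_
    intro τ _
    simp only [Equiv.coe_mulRight, Equiv.Perm.sign_mul]
    have hprod : ∏ i, C (σ i) ((τ * σ) i) = ∏ i, C i (τ i) := by
      have := Equiv.prod_comp σ (fun j => C j (τ j))
      rw [← this]
      refine Finset.prod_congr rfl ?_
      intro i _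
      rfl
    rw [hprod]
    push_cast
    ring
  simp_rw [e2]
  rw [← Finset.sum_mul]
  have hsum : ∑ σ : Equiv.Perm (Fin r),
      ((Equiv.Perm.sign σ : ℤ) : ℂ) * ((Equiv.Perm.sign σ : ℤ) : ℂ) = (r.factorial : ℂ) := by
    rw [Finset.sum_congr rfl (fun σ _ => sign_sq r σ)]
    rw [Finset.sum_const, Finset.card_univ, Fintype.card_perm]
    simp
  rw [hsum]
  congr 1
  have hdet : Matrix.det (Matrix.transpose C) =
      ∑ τ : Equiv.Perm (Fin r), ((Equiv.Perm.sign τ : ℤ) : ℂ) * ∏ i, C i (τ i) := by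
    rw [Matrix.det_apply']
    refine Finset.sum_congr rfl ?_
    intro τ _
    congr 1
  rw [← Matrix.det_transpose C, hdet]

end part5
section part6
variable (r k : ℕ) (v : Fin r → ℤ)

lemma c_val (hr : 1 ≤ r) (hk : 1 ≤ k) (hdec : ∀ i j : Fin r, i < j → v j < v i)
    (hlow : ∀ i, 0 ≤ v i) (hhigh : ∀ i, v i < (r : ℤ) + (k : ℤ)) (p q : Fin r) :
    ∑ a ∈ Finset.Icc (0 : ℤ) ((r : ℤ) + (k : ℤ) - 2),
        (zeta r k v p * (zeta r k v q)⁻¹) ^ a =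
      ((r : ℂ) + (k : ℂ)) * (if p = q then 1 else 0) -
        (zeta r k v p)⁻¹ * zeta r k v q := by
  have hrk : r + k ≠ 0 := by omega
  set w : ℂ := zeta r k v p * (zeta r k v q)⁻¹ with hw
  have hzq : zeta r k v q ≠ 0 := zeta_ne_zero r k v q
  have hzp : zeta r k v p ≠ 0 := zeta_ne_zero r k v p
  have hw0 : w ≠ 0 := mul_ne_zero hzp (inv_ne_zero hzq)
  -- convert to a range sum
  have hconv : ∑ a ∈ Finset.Icc (0 : ℤ) ((r : ℤ) + (k : ℤ) - 2), w ^ a =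
      ∑ a ∈ Finset.range (r + k - 1), w ^ (a : ℕ) := by
    refine Finset.sum_nbij' (fun a : ℤ => a.toNat) (fun b : ℕ => (b : ℤ)) ?_ ?_ ?_ ?_ ?_
    · intro a ha
      rw [Finset.mem_Icc] at ha
      rw [Finset.mem_range]
      omega
    · intro b hb
      rw [Finset.mem_range] at hb
      rw [Finset.mem_Icc]
      omega
    · intro a ha
      rw [Finset.mem_Icc] at ha
      omega
    · intro b _
      omega
    · intro a ha
      rw [Finset.mem_Icc] at ha
      rw [← zpow_natCast w a.toNat]
      congr 1
      omega
  rw [hconv]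
  have hwn : w ^ ((r : ℤ) + (k : ℤ)) = 1 := by
    rw [hw, mul_zpow, inv_zpow, zeta_zpow_n r k v hrk, zeta_zpow_n r k v hrk]
    simp
  by_cases hpq : p = q
  · subst hpq
    have hw1 : w = 1 := by rw [hw, mul_inv_cancel₀ hzp]
    rw [hw1]
    simp only [one_pow, Finset.sum_const, Finset.card_range, nsmul_eq_mul, mul_one, if_pos rfl]
    rw [inv_mul_cancel₀ hzp]
    have hc : ((r + k - 1 : ℕ) : ℂ) = (r : ℂ) + (k : ℂ) - 1 := by
      rw [Nat.cast_sub (by omega)]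
      push_cast
      ring
    rw [hc]
    simp only [if_true]
    ring
  · have hw1 : w ≠ 1 := by
      intro h
      apply hpq
      have : zeta r k v p = zeta r k v q := by
        rw [hw, mul_inv_eq_one₀ hzq] at h
        exact h
      exact zeta_injective r k v hrk hdec hlow hhigh this
    rw [geom_sum_eq hw1]
    have hpow : w ^ (r + k - 1 : ℕ) = w⁻¹ := by
      have h1 : ((r + k - 1 : ℕ) : ℤ) = (r : ℤ) + (k : ℤ) - 1 := by omega
      rw [← zpow_natCast w (r + k - 1), h1]
      rw [show (r : ℤ) + (k : ℤ) - 1 = ((r : ℤ) + (k : ℤ)) + (-1) by ring]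
      rw [zpow_add₀ hw0, hwn, one_mul, zpow_neg, zpow_one]
    rw [hpow, if_neg hpq]
    have hwinv : w⁻¹ = (zeta r k v p)⁻¹ * zeta r k v q := by
      rw [hw, mul_inv, inv_inv]
    have hkey : (w⁻¹ - 1) = (0 - w⁻¹) * (w - 1) := by
      have h1 : w⁻¹ * w = 1 := inv_mul_cancel₀ hw0
      linear_combination h1
    rw [← hwinv, div_eq_iff (sub_ne_zero.2 hw1), mul_zero, hkey]
end part6
section part7
variable (r k : ℕ) (v : Fin r → ℤ)

lemma det_C (hr : 1 ≤ r) (hk : 1 ≤ k) :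
    Matrix.det (Matrix.of fun p q : Fin r =>
        ((r : ℂ) + (k : ℂ)) * (if p = q then 1 else 0) -
          (zeta r k v p)⁻¹ * zeta r k v q) =
      (k : ℂ) * ((r : ℂ) + (k : ℂ)) ^ (r - 1) := by
  have hrk : r + k ≠ 0 := by omega
  have hn : ((r : ℂ) + (k : ℂ)) ≠ 0 := ncast_ne_zero r k hrk
  have hmat : (Matrix.of fun p q : Fin r =>
      ((r : ℂ) + (k : ℂ)) * (if p = q then 1 else 0) -
        (zeta r k v p)⁻¹ * zeta r k v q) =
      ((r : ℂ) + (k : ℂ)) • (1 + Matrix.replicateCol Unit (fun p => -(zeta r k v p)⁻¹ / ((r : ℂ) + (k : ℂ))) *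
        Matrix.replicateRow Unit (zeta r k v)) := by
    ext p q
    simp only [Matrix.of_apply, Matrix.smul_apply, Matrix.add_apply, Matrix.one_apply,
      Matrix.mul_apply, Matrix.replicateCol_apply, Matrix.replicateRow_apply, Finset.univ_unique,
      Finset.sum_singleton, smul_eq_mul]
    have hz := zeta_ne_zero r k v p
    by_cases hpq : p = q
    · subst hpq
      simp only [if_pos rfl]
      field_simp
      ring
    · simp only [if_neg hpq]
      field_simp
      ring
  rw [hmat, Matrix.det_smul, Matrix.det_one_add_replicateCol_mul_replicateRow]
  have hdot : dotProduct (zeta r k v) (fun p => -(zeta r k v p)⁻¹ / ((r : ℂ) + (k : ℂ))) =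
      -(r : ℂ) / ((r : ℂ) + (k : ℂ)) := by
    unfold dotProduct
    have : ∀ p : Fin r, zeta r k v p * (-(zeta r k v p)⁻¹ / ((r : ℂ) + (k : ℂ))) =
        -(1 / ((r : ℂ) + (k : ℂ))) := by
      intro p
      have hz := zeta_ne_zero r k v p
      field_simp
    rw [Finset.sum_congr rfl (fun p _ => this p)]
    rw [Finset.sum_const, Finset.card_univ, Fintype.card_fin, nsmul_eq_mul]
    field_simp
  rw [hdot, Fintype.card_fin]
  have hpow : ((r : ℂ) + (k : ℂ)) ^ r = ((r : ℂ) + (k : ℂ)) ^ (r - 1) * ((r : ℂ) + (k : ℂ)) := by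
    rw [← pow_succ]
    congr 1
    omega
  rw [hpow]
  field_simp
  ring
end part7
section part8
variable (r k : ℕ) (v : Fin r → ℤ)

lemma sum_box_orth (hr : 1 ≤ r) (hk : 1 ≤ k) (hdec : ∀ i j : Fin r, i < j → v j < v i)
    (hlow : ∀ i, 0 ≤ v i) (hhigh : ∀ i, v i < (r : ℤ) + (k : ℤ)) :
    ∑ t ∈ Box r k, Fdet r k v t * (starRingEnd ℂ) (Fdet r k v t) =
      (r.factorial : ℂ) * ((k : ℂ) * ((r : ℂ) + (k : ℂ)) ^ (r - 1)) := by
  classical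
  set C : Matrix (Fin r) (Fin r) ℂ := Matrix.of (fun p q : Fin r =>
    ((r : ℂ) + (k : ℂ)) * (if p = q then 1 else 0) -
      (zeta r k v p)⁻¹ * zeta r k v q) with hC
  have step1 : ∀ t : Fin r → ℤ,
      Fdet r k v t * (starRingEnd ℂ) (Fdet r k v t) =
      ∑ σ : Equiv.Perm (Fin r), ∑ τ : Equiv.Perm (Fin r),
        ((Equiv.Perm.sign σ : ℤ) : ℂ) * ((Equiv.Perm.sign τ : ℤ) : ℂ) *
          ∏ i, (zeta r k v (σ.symm i) * (zeta r k v (τ.symm i))⁻¹) ^ (t i) := by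
    intro t
    have hFdet : Fdet r k v t = ∑ σ : Equiv.Perm (Fin r),
        ((Equiv.Perm.sign σ : ℤ) : ℂ) * ∏ i, zeta r k v i ^ (t (σ i)) := by
      rw [Fdet, Matrix.det_apply']
      exact Finset.sum_congr rfl (fun σ _ => rfl)
    have hFdetc : (starRingEnd ℂ) (Fdet r k v t) = ∑ τ : Equiv.Perm (Fin r),
        ((Equiv.Perm.sign τ : ℤ) : ℂ) * ∏ i, zeta r k v i ^ (-(t (τ i))) := by
      rw [← Fdet_neg, Fdet, Matrix.det_apply']
      exact Finset.sum_congr rfl (fun τ _ => rfl)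
    rw [hFdetc, hFdet, Finset.sum_mul_sum]
    refine Finset.sum_congr rfl (fun σ _ => Finset.sum_congr rfl (fun τ _ => ?_))
    have h1 : ∏ i, zeta r k v i ^ (t (σ i)) = ∏ i, zeta r k v (σ.symm i) ^ (t i) := by
      rw [← Equiv.prod_comp σ (fun i => zeta r k v (σ.symm i) ^ (t i))]
      exact Finset.prod_congr rfl (fun i _ => by simp)
    have h2 : ∏ i, zeta r k v i ^ (-(t (τ i))) =
        ∏ i, zeta r k v (τ.symm i) ^ (-(t i)) := by
      rw [← Equiv.prod_comp τ (fun i => zeta r k v (τ.symm i) ^ (-(t i)))]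
      exact Finset.prod_congr rfl (fun i _ => by simp)
    rw [h1, h2]
    have h3 : (∏ i, zeta r k v (σ.symm i) ^ (t i)) * (∏ i, zeta r k v (τ.symm i) ^ (-(t i))) =
        ∏ i, (zeta r k v (σ.symm i) * (zeta r k v (τ.symm i))⁻¹) ^ (t i) := by
      rw [← Finset.prod_mul_distrib]
      refine Finset.prod_congr rfl (fun i _ => ?_)
      rw [mul_zpow, inv_zpow, ← zpow_neg]
    rw [← h3]
    ring
  rw [Finset.sum_congr rfl (fun t _ => step1 t)]
  rw [Finset.sum_comm]
  have swap2 : ∀ σ : Equiv.Perm (Fin r),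
      ∑ t ∈ Box r k, ∑ τ : Equiv.Perm (Fin r),
        ((Equiv.Perm.sign σ : ℤ) : ℂ) * ((Equiv.Perm.sign τ : ℤ) : ℂ) *
          ∏ i, (zeta r k v (σ.symm i) * (zeta r k v (τ.symm i))⁻¹) ^ (t i) =
      ∑ τ : Equiv.Perm (Fin r),
        ((Equiv.Perm.sign σ : ℤ) : ℂ) * ((Equiv.Perm.sign τ : ℤ) : ℂ) *
          ∏ i, C (σ.symm i) (τ.symm i) := by
    intro σ
    rw [Finset.sum_comm]
    refine Finset.sum_congr rfl (fun τ _ => ?_)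
    rw [← Finset.mul_sum]
    congr 1
    have hbox : ∑ t ∈ Box r k,
        ∏ i, (zeta r k v (σ.symm i) * (zeta r k v (τ.symm i))⁻¹) ^ (t i) =
        ∏ i, ∑ a ∈ Finset.Icc (0 : ℤ) ((r : ℤ) + (k : ℤ) - 2),
          (zeta r k v (σ.symm i) * (zeta r k v (τ.symm i))⁻¹) ^ a := by
      rw [Box, ← Finset.prod_univ_sum]
    rw [hbox]
    refine Finset.prod_congr rfl (fun i _ => ?_)
    rw [c_val r k v hr hk hdec hlow hhigh]
    rfl
  rw [Finset.sum_congr rfl (fun σ _ => swap2 σ)]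
  rw [double_perm_sum, hC, det_C r k v hr hk]
end part8
section part9
variable (r k : ℕ) (v : Fin r → ℤ)

lemma prod_pairs {M : Type*} [CommMonoid M] (f : Fin r → Fin r → M) :
    ∏ p ∈ Finset.univ.filter (fun p : Fin r × Fin r => p.1 < p.2), f p.1 p.2 =
      ∏ i : Fin r, ∏ j ∈ Finset.Ioi i, f i j := by
  rw [← Finset.prod_sigma Finset.univ (fun i => Finset.Ioi i) (fun x => f x.1 x.2)]
  refine Finset.prod_nbij' (fun p => ⟨p.1, p.2⟩) (fun x => (x.1, x.2)) ?_ ?_ ?_ ?_ ?_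
  · intro p hp
    rw [Finset.mem_filter] at hp
    rw [Finset.mem_sigma]
    exact ⟨Finset.mem_univ _, Finset.mem_Ioi.2 hp.2⟩
  · intro x hx
    rw [Finset.mem_sigma] at hx
    rw [Finset.mem_filter]
    exact ⟨Finset.mem_univ _, Finset.mem_Ioi.1 hx.2⟩
  · intro p _; rfl
  · intro x _; rfl
  · intro p _; rfl

lemma zeta_mul_conj (a b : Fin r) :
    zeta r k v a * (starRingEnd ℂ) (zeta r k v b) =
      Complex.exp (2 * (Real.pi : ℂ) * Complex.I * ((v a : ℂ) - (v b : ℂ)) /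
        ((r : ℂ) + (k : ℂ))) := by
  rw [zeta, zeta, ← Complex.exp_conj, ← Complex.exp_add]
  congr 1
  simp only [map_div₀, map_mul, Complex.conj_I, Complex.conj_ofReal, map_ofNat,
    map_intCast, map_add, map_natCast]
  ring

lemma pair_identity (i j : Fin r) :
    (zeta r k v j - zeta r k v i) * (starRingEnd ℂ) (zeta r k v j - zeta r k v i) =
      (((2 * Real.sin (Real.pi * ((v i : ℝ) - (v j : ℝ)) / ((r : ℝ) + (k : ℝ)))) ^ 2 : ℝ) : ℂ) := by
  set c : ℂ := 2 * (Real.pi : ℂ) * Complex.I * ((v i : ℂ) - (v j : ℂ)) / ((r : ℂ) + (k : ℂ))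
    with hc
  have hii : zeta r k v i * (starRingEnd ℂ) (zeta r k v i) = 1 := by
    rw [zeta_mul_conj]; simp
  have hjj : zeta r k v j * (starRingEnd ℂ) (zeta r k v j) = 1 := by
    rw [zeta_mul_conj]; simp
  have hij : zeta r k v i * (starRingEnd ℂ) (zeta r k v j) = Complex.exp c := by
    rw [zeta_mul_conj]
  have hji : zeta r k v j * (starRingEnd ℂ) (zeta r k v i) = Complex.exp (-c) := by
    rw [zeta_mul_conj]
    congr 1
    rw [hc]; ring
  set y : ℝ := Real.pi * ((v i : ℝ) - (v j : ℝ)) / ((r : ℝ) + (k : ℝ)) with hy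
  have hyc : 2 * ((y : ℂ) * Complex.I) = c := by
    rw [hy, hc]
    push_cast
    ring
  have hrhs : (((2 * Real.sin y) ^ 2 : ℝ) : ℂ) =
      2 - Complex.exp c - Complex.exp (-c) := by
    push_cast
    rw [Complex.sin]
    set u := Complex.exp (-(y : ℂ) * Complex.I) with hu
    set u' := Complex.exp ((y : ℂ) * Complex.I) with hu'
    have huu' : u * u' = 1 := by
      rw [hu, hu', ← Complex.exp_add]; simp
    have hu2 : u * u = Complex.exp (-c) := by
      rw [hu, ← Complex.exp_add]
      congr 1
      linear_combination -hyc
    have hu'2 : u' * u' = Complex.exp c := by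
      rw [hu', ← Complex.exp_add]
      congr 1
      linear_combination hyc
    rw [← hu2, ← hu'2]
    have hI : (Complex.I) ^ 2 = -1 := Complex.I_sq
    linear_combination ((u - u') ^ 2) * hI + 2 * huu'
  rw [hrhs, map_sub]
  linear_combination hjj + hii - hij - hji

lemma Dv_eq_lemma :
    ((Dv r k v : ℝ) : ℂ) =
      Fdet r k v (fun i => ((i : ℕ) : ℤ)) *
        (starRingEnd ℂ) (Fdet r k v (fun i => ((i : ℕ) : ℤ))) := by
  rw [Fdet_id_eq, Dv, Complex.ofReal_prod]
  rw [map_prod]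
  have hconj : ∀ i : Fin r, (starRingEnd ℂ) (∏ j ∈ Finset.Ioi i, (zeta r k v j - zeta r k v i)) =
      ∏ j ∈ Finset.Ioi i, (starRingEnd ℂ) (zeta r k v j - zeta r k v i) := fun i => map_prod _ _ _
  rw [Finset.prod_congr rfl (fun i _ => hconj i), ← Finset.prod_mul_distrib]
  rw [prod_pairs r (fun i j => (((2 * Real.sin (Real.pi * ((v i : ℝ) - (v j : ℝ)) /
    ((r : ℝ) + (k : ℝ)))) ^ 2 : ℝ) : ℂ))]
  refine Finset.prod_congr rfl (fun i _ => ?_)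
  rw [← Finset.prod_mul_distrib]
  refine Finset.prod_congr rfl (fun j _ => ?_)
  rw [pair_identity]

end part9
section part10
variable (r k : ℕ) (v : Fin r → ℤ)

noncomputable def Ev (r k : ℕ) (v : Fin r → ℤ) : ℂ :=
  Complex.exp (2 * (Real.pi : ℂ) * Complex.I * (∑ i, (v i : ℂ)) / ((r : ℂ) + (k : ℂ)))

lemma Ev_ne_zero : Ev r k v ≠ 0 := Complex.exp_ne_zero _

lemma prod_zeta_zpow (c : ℤ) : ∏ j, zeta r k v j ^ c = (Ev r k v) ^ c := by
  have h1 : ∀ j : Fin r, zeta r k v j ^ c =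
      Complex.exp (c * (2 * (Real.pi : ℂ) * Complex.I * (v j : ℂ) / ((r : ℂ) + (k : ℂ)))) := by
    intro j
    rw [zeta_zpow]
    congr 1
    ring
  rw [Finset.prod_congr rfl (fun j _ => h1 j), ← Complex.exp_sum]
  rw [Ev, ← Complex.exp_int_mul]
  congr 1
  rw [← Finset.mul_sum]
  congr 1
  rw [← Finset.sum_div, ← Finset.mul_sum]

lemma Ev_pow_n (hrk : r + k ≠ 0) : (Ev r k v) ^ ((r : ℤ) + (k : ℤ)) = 1 := by
  have hn : ((r : ℂ) + (k : ℂ)) ≠ 0 := ncast_ne_zero r k hrk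
  rw [Ev, ← Complex.exp_int_mul]
  have h : (((r : ℤ) + (k : ℤ) : ℤ) : ℂ) *
      (2 * (Real.pi : ℂ) * Complex.I * (∑ i, (v i : ℂ)) / ((r : ℂ) + (k : ℂ))) =
      ((∑ i, v i : ℤ) : ℂ) * (2 * (Real.pi : ℂ) * Complex.I) := by
    push_cast
    field_simp
  rw [h, Complex.exp_int_mul_two_pi_mul_I]

end part10
section part11
variable (r k : ℕ) (v : Fin r → ℤ)

theorem main_statement (hr : 1 ≤ r) (hk : 1 ≤ k)
    (hdec : ∀ i j : Fin r, i < j → v j < v i)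
    (hlow : ∀ i, 0 ≤ v i) (hhigh : ∀ i, v i < (r : ℤ) + (k : ℤ)) :
    ∑ μ ∈ Pk r k, schur μ (zeta r k v) * schur (mustar k μ) (zeta r k v) =
      Complex.exp (2 * (Real.pi : ℂ) * Complex.I * (k : ℂ) * (∑ i, (v i : ℂ)) /
          ((r : ℂ) + (k : ℂ))) *
        ((k : ℂ) * ((r : ℂ) + (k : ℂ)) ^ (r - 1) / ((Dv r k v : ℝ) : ℂ)) := by
  classical
  have hrk : r + k ≠ 0 := by omega
  set V : ℂ := Fdet r k v (fun i => ((i : ℕ) : ℤ)) with hVdef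
  set s : ℂ := ((Equiv.Perm.sign (Fin.revPerm : Equiv.Perm (Fin r)) : ℤ) : ℂ) with hsdef
  set E : ℂ := Ev r k v with hEdef
  set K : ℂ := (k : ℂ) * ((r : ℂ) + (k : ℂ)) ^ (r - 1) with hKdef
  set W : ℂ := Fdet r k v (fun i => (r : ℤ) - 1 - ((i : ℕ) : ℤ)) with hWdef
  have hιrev : ((fun i : Fin r => ((i : ℕ) : ℤ)) ∘ ⇑(Fin.revPerm : Equiv.Perm (Fin r))) =
      fun i : Fin r => (r : ℤ) - 1 - ((i : ℕ) : ℤ) := by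
    funext i
    simp only [Function.comp_apply, Fin.revPerm_apply, Fin.val_rev]
    have := i.isLt
    omega
  have hW : W = s * V := by
    rw [hWdef, ← hιrev, Fdet_perm]
  have hs2 : s * s = 1 := sign_sq r _
  have hs0 : s ≠ 0 := by
    intro h; rw [h] at hs2; simp at hs2
  have hV0 : V ≠ 0 := Fdet_id_ne_zero r k v hrk hdec hlow hhigh
  have hE0 : E ≠ 0 := Ev_ne_zero r k v
  have hW0 : W ≠ 0 := by rw [hW]; exact mul_ne_zero hs0 hV0
  have hcW : (starRingEnd ℂ) W = E ^ ((1 : ℤ) - (r : ℤ)) * V := by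
    rw [hWdef, ← Fdet_neg r k v (fun i : Fin r => (r : ℤ) - 1 - ((i : ℕ) : ℤ))]
    have h : (fun i : Fin r => -((r : ℤ) - 1 - ((i : ℕ) : ℤ))) =
        fun i : Fin r => ((i : ℕ) : ℤ) + ((1 : ℤ) - (r : ℤ)) := by
      funext i; ring
    rw [h, Fdet_add_const, prod_zeta_zpow]
  have hcs : (starRingEnd ℂ) s = s := by rw [hsdef]; simp
  have hDv : ((Dv r k v : ℝ) : ℂ) = W * (starRingEnd ℂ) W := by
    rw [Dv_eq_lemma, ← hVdef, hW, map_mul, hcs]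
    linear_combination (-(V * (starRingEnd ℂ) V)) * hs2
  have hterm : ∀ μ : Fin r → ℤ,
      schur μ (zeta r k v) * schur (mustar k μ) (zeta r k v) =
      (E ^ ((r : ℤ) + (k : ℤ) - 1) * s / (W * W)) *
        (Fdet r k v (emu μ) * (starRingEnd ℂ) (Fdet r k v (emu μ))) := by
    intro μ
    have hnum1 : schur μ (zeta r k v) = Fdet r k v (emu μ) / W := rfl
    have hmust : emu (mustar k μ) =
        fun i : Fin r => ((fun j : Fin r => -(emu μ j)) ∘
          ⇑(Fin.revPerm : Equiv.Perm (Fin r))) i + ((r : ℤ) + (k : ℤ) - 1) := by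
      funext i
      simp only [emu, mustar, Function.comp_apply, Fin.revPerm_apply, Fin.val_rev]
      have h1 := i.isLt
      omega
    have hnum2 : schur (mustar k μ) (zeta r k v) =
        (E ^ ((r : ℤ) + (k : ℤ) - 1) *
          (s * (starRingEnd ℂ) (Fdet r k v (emu μ)))) / W := by
      have h0 : schur (mustar k μ) (zeta r k v) = Fdet r k v (emu (mustar k μ)) / W := rfl
      rw [h0, hmust, Fdet_add_const, Fdet_perm, Fdet_neg, prod_zeta_zpow]
    rw [hnum1, hnum2]
    field_simp
  rw [Finset.sum_congr rfl (fun μ _ => hterm μ), ← Finset.mul_sum]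
  have hkey : ∑ μ ∈ Pk r k, Fdet r k v (emu μ) * (starRingEnd ℂ) (Fdet r k v (emu μ)) = K := by
    have h2 := sum_box_orth r k v hr hk hdec hlow hhigh
    rw [sum_box_eq r k v hr] at h2
    have hfac : ((r.factorial : ℕ) : ℂ) ≠ 0 := Nat.cast_ne_zero.2 (Nat.factorial_ne_zero r)
    exact mul_left_cancel₀ hfac h2
  rw [hkey]
  have hEk : Complex.exp (2 * (Real.pi : ℂ) * Complex.I * (k : ℂ) * (∑ i, (v i : ℂ)) /
      ((r : ℂ) + (k : ℂ))) = E ^ (k : ℤ) := by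
    rw [hEdef, Ev, ← Complex.exp_int_mul]
    congr 1
    push_cast
    ring
  rw [hEk, hDv, hcW, hW]
  have hzpow : E ^ ((r : ℤ) + (k : ℤ) - 1) * E ^ ((1 : ℤ) - (r : ℤ)) = E ^ (k : ℤ) := by
    rw [← zpow_add₀ hE0]
    congr 1
    ring
  have hden1 : (s * V) * (s * V) ≠ 0 :=
    mul_ne_zero (mul_ne_zero hs0 hV0) (mul_ne_zero hs0 hV0)
  have hden2 : (s * V) * (E ^ ((1 : ℤ) - (r : ℤ)) * V) ≠ 0 :=
    mul_ne_zero (mul_ne_zero hs0 hV0) (mul_ne_zero (zpow_ne_zero _ hE0) hV0)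
  rw [div_mul_eq_mul_div, ← mul_div_assoc, div_eq_div_iff hden1 hden2]
  linear_combination (s * s * K * V * V) * hzpow

end part11

end AuxProof

/-- `Σ_{μ∈P_k} S_μ(ζ_v)·S_{μ*}(ζ_v) = e^{2πik|v|/(r+k)} · k(r+k)^{r-1} / D(v)`. -/
theorem sum_Pk_schur_mul_schur_star (r k : ℕ) (hr : 1 ≤ r) (hk : 1 ≤ k)
    (v : Fin r → ℤ) (hdec : ∀ i j : Fin r, i < j → v j < v i)
    (hlow : ∀ i, 0 ≤ v i) (hhigh : ∀ i, v i < (r : ℤ) + (k : ℤ)) :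
    ∑ μ ∈ Pk r k, schur μ (zeta r k v) * schur (mustar k μ) (zeta r k v) =
      Complex.exp (2 * (Real.pi : ℂ) * Complex.I * (k : ℂ) * (∑ i, (v i : ℂ)) /
          ((r : ℂ) + (k : ℂ))) *
        ((k : ℂ) * ((r : ℂ) + (k : ℂ)) ^ (r - 1) / ((Dv r k v : ℝ) : ℂ)) :=
  main_statement r k v hr hk hdec hlow hhigh
end VerlindePaper
end
end

section
/- Let v and v′ be integer vectors with 0 ≤ v_r < v_{r−1} < ⋯ < v_1 < r+k and 0 ≤ v′_r < v′_{r−1} < ⋯ < v′_1 < r+k such that v − v′ is not a constant vector (a,a,…,a). Then Σ_{μ∈W_k} exp(−2πi|μ|·|v|/(r(r+k))) · exp(−2πi|μ*|·|v′|/(r(r+k))) · S_μ(ζ_v) · S_{μ*}(ζ_{v′}) = 0. -/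
open scoped BigOperators
open Complex

noncomputable section

namespace VerlindePaper

section Helpers
open Complex Finset

lemma sm_le {r : ℕ} {f : Fin r → ℕ} (hf : StrictMono f) :
    ∀ d : ℕ, ∀ i j : Fin r, (j : ℕ) = (i : ℕ) + d → f i + d ≤ f j := by
  intro d
  induction d with
  | zero => intro i j hij; have : i = j := Fin.ext (by omega); subst this; omega
  | succ d IH =>
    intro i j hij
    have hjpos : 0 < (j : ℕ) := by omega
    have hlt : (j : ℕ) - 1 < r := by omega
    set j' : Fin r := ⟨(j : ℕ) - 1, hlt⟩ with hj'
    have h1 : f i + d ≤ f j' := IH i j' (by simp [hj']; omega)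
    have h2 : f j' < f j := hf (by rw [Fin.lt_def]; simp [hj']; omega)
    omega


lemma strictMono_perm_eq_id {r : ℕ} (f : Fin r → Fin r) (hbij : Function.Bijective f)
    (hmono : StrictMono f) : ∀ i, f i = i := by
  have H : ∀ m : ℕ, ∀ i : Fin r, (i : ℕ) = m → f i = i := by
    intro m
    induction m using Nat.strong_induction_on with
    | _ m IH =>
      intro i him
      have IH' : ∀ j : Fin r, j < i → f j = j := fun j hj => IH j (by omega) j rfl
      rcases lt_trichotomy (f i) i with h | h | h
      · have h2 : f (f i) = f i := IH' (f i) h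
        exact absurd (hmono.injective h2) h.ne
      · exact h
      · obtain ⟨m', hm⟩ := hbij.surjective i
        rcases lt_trichotomy m' i with hmi | hmi | hmi
        · have : f m' = m' := IH' m' hmi
          rw [hm] at this; exact absurd this hmi.ne'
        · rw [hmi] at hm; omega
        · have := hmono hmi
          rw [hm] at this
          exact absurd (this.trans h) (lt_irrefl _)
  intro i; exact H i.val i rfl

lemma exp_two_pi_I_int_div_eq_one_iff {n : ℕ} (hn : n ≠ 0) (q : ℤ) :
    Complex.exp (2 * Real.pi * Complex.I * (q : ℂ) / (n : ℂ)) = 1 ↔ (n : ℤ) ∣ q := by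
  have hn' : (n : ℂ) ≠ 0 := Nat.cast_ne_zero.mpr hn
  have h2 : (2 : ℂ) * Real.pi * I ≠ 0 := by
    simp [Real.pi_ne_zero, Complex.I_ne_zero, Complex.ofReal_ne_zero]
  rw [Complex.exp_eq_one_iff]
  constructor
  · rintro ⟨m, hm⟩
    refine ⟨m, ?_⟩
    have h3 : (q : ℂ) = (n : ℂ) * m := by
      field_simp at hm
      have h4 : 2 * (Real.pi:ℂ) * I * (q:ℂ) = 2 * (Real.pi:ℂ) * I * ((n:ℂ) * m) :=
        by rw [hm]
      exact mul_left_cancel₀ h2 h4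
    exact_mod_cast h3
  · rintro ⟨m, rfl⟩
    refine ⟨m, ?_⟩
    field_simp
    push_cast; ring



noncomputable def FF {r : ℕ} (x y : Fin r → ℂ) (t : Fin r → ℕ) : ℂ :=
  (∏ j, x j ^ t j) * (Matrix.of fun i l : Fin r => y l ^ t i).det

lemma FF_eq_zero_of_not_inj {r : ℕ} (x y : Fin r → ℂ) (t : Fin r → ℕ)
    (h : ¬ Function.Injective t) : FF x y t = 0 := by
  rw [Function.not_injective_iff] at h
  obtain ⟨i, i', hii, hne⟩ := h
  unfold FF
  rw [Matrix.det_zero_of_row_eq hne (by ext l; simp [hii]), mul_zero]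

lemma FF_eq_zero_of_eq_rows {r : ℕ} (x y : Fin r → ℂ) (t : Fin r → ℕ) (i i' : Fin r)
    (hne : i ≠ i') (h : ∀ l, y l ^ t i = y l ^ t i') : FF x y t = 0 := by
  unfold FF
  rw [Matrix.det_zero_of_row_eq hne (by ext l; simp [h l]), mul_zero]

lemma FF_succ {r : ℕ} (x y : Fin r → ℂ) (t : Fin r → ℕ) :
    FF x y (fun j => t j + 1) = ((∏ j, x j) * (∏ l, y l)) * FF x y t := by
  unfold FF
  have h1 : (∏ j, x j ^ (t j + 1)) = (∏ j, x j) * ∏ j, x j ^ t j := by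
    rw [← Finset.prod_mul_distrib]
    exact Finset.prod_congr rfl fun j _ => by ring
  have h2 : (Matrix.of fun i l : Fin r => y l ^ (t i + 1)).det
      = (∏ l, y l) * (Matrix.of fun i l : Fin r => y l ^ t i).det := by
    have := Matrix.det_mul_row (fun l => y l) (Matrix.of fun i l : Fin r => y l ^ t i)
    rw [← this]
    congr 1
    ext i l
    simp [pow_succ, mul_comm]
  rw [h1, h2]; ring

lemma FF_update_zero {r : ℕ} {n : ℕ} (x y : Fin r → ℂ) (γ : ℂ)
    (hxn : ∀ j, x j ^ n = γ) (hyn : ∀ l, y l ^ n = 1)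
    (t : Fin r → ℕ) (a : Fin r) (ha : t a = n) :
    FF x y t = γ * FF x y (Function.update t a 0) := by
  unfold FF
  have hdet : (Matrix.of fun i l : Fin r => y l ^ t i).det
      = (Matrix.of fun i l : Fin r => y l ^ (Function.update t a 0 i)).det := by
    congr 1
    ext i l
    by_cases hi : i = a
    · subst hi; simp [ha, hyn l, Function.update_self]
    · simp [Function.update_of_ne hi]
  have hprod : (∏ j, x j ^ t j) = γ * ∏ j, x j ^ (Function.update t a 0 j) := by
    rw [← Finset.mul_prod_erase Finset.univ _ (Finset.mem_univ a),
        ← Finset.mul_prod_erase Finset.univ (fun j => x j ^ (Function.update t a 0 j)) (Finset.mem_univ a)]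
    rw [Function.update_self, ha, hxn a, pow_zero]
    rw [show (γ * (1 * ∏ j ∈ Finset.univ.erase a, x j ^ (Function.update t a 0 j)) : ℂ)
        = γ * ∏ j ∈ Finset.univ.erase a, x j ^ (Function.update t a 0 j) by ring]
    congr 1
    exact Finset.prod_congr rfl fun j hj => by
      rw [Function.update_of_ne (Finset.ne_of_mem_erase hj)]
  rw [hdet, hprod]; ring

lemma geom_zero {n : ℕ} (z : ℂ) (hz : z ≠ 1) (hzn : z ^ n = 1) :
    ∑ s ∈ Finset.range n, z ^ s = 0 := by
  rw [geom_sum_eq hz, hzn, sub_self, zero_div]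

lemma FF_expand {r : ℕ} (x y : Fin r → ℂ) (t : Fin r → ℕ) :
    FF x y t = ∑ σ : Equiv.Perm (Fin r),
      ((Equiv.Perm.sign σ : ℤ) : ℂ) * ∏ j, (x j * y (σ⁻¹ j)) ^ t j := by
  unfold FF
  rw [Matrix.det_apply']
  rw [Finset.mul_sum]
  refine Finset.sum_congr rfl fun σ _ => ?_
  have h1 : (∏ i, (Matrix.of fun i l : Fin r => y l ^ t i) (σ i) i)
      = ∏ j, (y (σ⁻¹ j)) ^ t j := by
    rw [← Equiv.prod_comp σ (fun j => (y (σ⁻¹ j)) ^ t j)]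
    refine Finset.prod_congr rfl fun i _ => ?_
    simp
  rw [h1,
    show (∏ j, (x j * y (σ⁻¹ j)) ^ t j) = ∏ j, (x j ^ t j * (y (σ⁻¹ j)) ^ t j) from
      Finset.prod_congr rfl fun j _ => mul_pow _ _ _,
    Finset.prod_mul_distrib]
  ring

lemma sum_Sa_eq_zero {r n : ℕ} (x y : Fin r → ℂ) (γ : ℂ)
    (hxn : ∀ j, x j ^ n = γ) (hyn : ∀ l, y l ^ n = 1) (hγ : γ = 1)
    (a : Fin r) (j₀ : Fin r) (hj₀ : j₀ ≠ a) (hrow : ∀ l, x j₀ * y l ≠ 1) :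
    ∑ t ∈ Fintype.piFinset (fun j => if j = a then ({0} : Finset ℕ) else Finset.range n),
      FF x y t = 0 := by
  classical
  rw [Finset.sum_congr rfl fun t _ => FF_expand x y t]
  rw [Finset.sum_comm]
  refine Finset.sum_eq_zero fun σ _ => ?_
  rw [← Finset.mul_sum]
  have hfac : ∑ t ∈ Fintype.piFinset (fun j => if j = a then ({0} : Finset ℕ) else Finset.range n),
      ∏ j, (x j * y (σ⁻¹ j)) ^ t j
      = ∏ j, ∑ s ∈ (if j = a then ({0} : Finset ℕ) else Finset.range n),
          (x j * y (σ⁻¹ j)) ^ s := by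
    rw [Finset.prod_univ_sum]
  rw [hfac]
  have hz : ∑ s ∈ (if j₀ = a then ({0} : Finset ℕ) else Finset.range n),
      (x j₀ * y (σ⁻¹ j₀)) ^ s = 0 := by
    rw [if_neg hj₀]
    refine geom_zero _ (hrow _) ?_
    rw [mul_pow, hxn, hyn, hγ, one_mul]
  rw [Finset.prod_eq_zero (Finset.mem_univ j₀) hz, mul_zero]

lemma core_sum_eq_zero (r n : ℕ) (hn : 2 ≤ n) (x y : Fin r → ℂ) (γ : ℂ)
    (hxn : ∀ j, x j ^ n = γ) (hyn : ∀ l, y l ^ n = 1)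
    (hprod : (∏ j, x j) * (∏ l, y l) = 1)
    (hzero : γ = 1 → ∀ a : Fin r, ∃ j, j ≠ a ∧ ∀ l, x j * y l ≠ 1) :
    ∑ t ∈ (Fintype.piFinset fun _ : Fin r => Finset.range n).filter
        (fun t => Function.Injective t ∧ ∃ a, t a = 0), FF x y t = 0 := by
  classical
  set T0 := (Fintype.piFinset fun _ : Fin r => Finset.range n).filter
      (fun t => Function.Injective t ∧ ∃ a, t a = 0) with hT0
  set Ω' := (Fintype.piFinset fun _ : Fin r => Finset.range (n+1)) with hΩ'
  set A0 := Ω'.filter (fun t => Function.Injective t ∧ ∃ a, t a = 0) with hA0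
  set An := Ω'.filter (fun t => Function.Injective t ∧ ∃ a, t a = n) with hAn
  set B := Ω'.filter (fun t => Function.Injective t) with hB
  have memΩ' : ∀ t : Fin r → ℕ, t ∈ Ω' ↔ ∀ i, t i < n + 1 := by
    intro t; rw [hΩ', Fintype.mem_piFinset]; simp only [Finset.mem_range]
  -- step 1 : sum over T0 equals sum over A0
  have h1 : ∑ t ∈ T0, FF x y t = ∑ t ∈ A0, FF x y t := by
    refine Finset.sum_subset ?_ ?_
    · intro t ht
      rw [hT0, Finset.mem_filter] at ht
      rw [hA0, Finset.mem_filter]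
      refine ⟨?_, ht.2⟩
      rw [memΩ']
      intro i
      have := (Fintype.mem_piFinset.mp ht.1) i
      rw [Finset.mem_range] at this
      omega
    · intro t ht hnt
      rw [hA0, Finset.mem_filter] at ht
      obtain ⟨hΩm, hinj, a, ha0⟩ := ht
      rw [memΩ'] at hΩm
      have hex : ∃ j, t j = n := by
        by_contra hne
        push_neg at hne
        refine hnt ?_
        rw [hT0, Finset.mem_filter]
        refine ⟨?_, hinj, a, ha0⟩
        rw [Fintype.mem_piFinset]
        intro i
        rw [Finset.mem_range]
        have h1 := hΩm i
        have h2 := hne i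
        omega
      obtain ⟨j, hj⟩ := hex
      refine FF_eq_zero_of_eq_rows x y t j a ?_ ?_
      · intro hja; rw [hja, ha0] at hj; omega
      · intro l; rw [hj, ha0, hyn l, pow_zero]
  -- step 2/3 : partitions of B
  have h2 : ∑ t ∈ B, FF x y t
      = ∑ t ∈ A0, FF x y t + ∑ t ∈ B.filter (fun t => ¬ ∃ a, t a = 0), FF x y t := by
    rw [← Finset.sum_filter_add_sum_filter_not B (fun t => ∃ a, t a = 0)]
    congr 1
    rw [hA0, hB, Finset.filter_filter]
  have h3 : ∑ t ∈ B, FF x y t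
      = ∑ t ∈ An, FF x y t + ∑ t ∈ B.filter (fun t => ¬ ∃ a, t a = n), FF x y t := by
    rw [← Finset.sum_filter_add_sum_filter_not B (fun t => ∃ a, t a = n)]
    congr 1
    rw [hAn, hB, Finset.filter_filter]
  -- step 4 : shift bijection
  have h4 : ∑ t ∈ B.filter (fun t => ¬ ∃ a, t a = 0), FF x y t
      = ∑ t ∈ B.filter (fun t => ¬ ∃ a, t a = n), FF x y t := by
    refine Finset.sum_nbij' (i := fun t => fun j => t j - 1) (j := fun t => fun j => t j + 1)
      ?_ ?_ ?_ ?_ ?_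
    · intro t ht
      rw [Finset.mem_filter, hB, Finset.mem_filter, memΩ'] at ht
      obtain ⟨⟨hmem, hinj⟩, hn0⟩ := ht
      push_neg at hn0
      have hpos : ∀ j, 1 ≤ t j := fun j => by have := hn0 j; omega
      rw [Finset.mem_filter, hB, Finset.mem_filter, memΩ']
      refine ⟨⟨?_, ?_⟩, ?_⟩
      · intro i
        show t i - 1 < n + 1
        have := hmem i; omega
      · intro i i' hii
        have hii' : t i - 1 = t i' - 1 := hii
        have h1 := hpos i; have h2 := hpos i'
        exact hinj (by clear hii; omega)
      · push_neg
        intro a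
        show t a - 1 ≠ n
        have := hmem a
        omega
    · intro t ht
      rw [Finset.mem_filter, hB, Finset.mem_filter, memΩ'] at ht
      obtain ⟨⟨hmem, hinj⟩, hnn⟩ := ht
      push_neg at hnn
      rw [Finset.mem_filter, hB, Finset.mem_filter, memΩ']
      refine ⟨⟨?_, ?_⟩, ?_⟩
      · intro i
        show t i + 1 < n + 1
        have h1 := hmem i; have h2 := hnn i; omega
      · intro i i' hii
        have hii' : t i + 1 = t i' + 1 := hii
        exact hinj (by clear hii; omega)
      · push_neg; intro a
        show t a + 1 ≠ 0
        omega
    · intro t ht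
      rw [Finset.mem_filter] at ht
      have hn0 := ht.2
      push_neg at hn0
      funext j
      show (t j - 1) + 1 = t j
      have := hn0 j
      omega
    · intro t _
      funext j
      show (t j + 1) - 1 = t j
      omega
    · intro t ht
      rw [Finset.mem_filter] at ht
      have hn0 := ht.2; push_neg at hn0
      have hteq : t = fun j => (t j - 1) + 1 := by
        funext j; have := hn0 j; omega
      calc FF x y t = FF x y (fun j => (t j - 1) + 1) := by rw [← hteq]
        _ = ((∏ j, x j) * (∏ l, y l)) * FF x y (fun j => t j - 1) := FF_succ x y _
        _ = FF x y (fun j => t j - 1) := by rw [hprod, one_mul]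
  -- step 5 : An sum = γ * A0 sum
  have h5 : ∑ t ∈ An, FF x y t = γ * ∑ t ∈ A0, FF x y t := by
    set An' := Ω'.filter (fun t => (Function.Injective t ∧ ∃ a, t a = n) ∧ ∀ b, t b ≠ 0)
      with hAn'
    set A0' := Ω'.filter (fun t => (Function.Injective t ∧ ∃ a, t a = 0) ∧ ∀ b, t b ≠ n)
      with hA0'
    have e1 : ∑ t ∈ An, FF x y t = ∑ t ∈ An', FF x y t := by
      refine (Finset.sum_subset ?_ ?_).symm
      · intro t ht
        rw [hAn', Finset.mem_filter] at ht
        rw [hAn, Finset.mem_filter]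
        exact ⟨ht.1, ht.2.1⟩
      · intro t ht hnt
        rw [hAn, Finset.mem_filter] at ht
        obtain ⟨hm, hinj, a, han⟩ := ht
        have : ∃ b, t b = 0 := by
          by_contra hb; push_neg at hb
          exact hnt (by rw [hAn', Finset.mem_filter]; exact ⟨hm, ⟨hinj, a, han⟩, hb⟩)
        obtain ⟨b, hb0⟩ := this
        refine FF_eq_zero_of_eq_rows x y t a b ?_ ?_
        · intro hab; rw [hab, hb0] at han; omega
        · intro l; rw [han, hb0, hyn l, pow_zero]
    have e2 : ∑ t ∈ A0, FF x y t = ∑ t ∈ A0', FF x y t := by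
      refine (Finset.sum_subset ?_ ?_).symm
      · intro t ht
        rw [hA0', Finset.mem_filter] at ht
        rw [hA0, Finset.mem_filter]
        exact ⟨ht.1, ht.2.1⟩
      · intro t ht hnt
        rw [hA0, Finset.mem_filter] at ht
        obtain ⟨hm, hinj, a, ha0⟩ := ht
        have : ∃ b, t b = n := by
          by_contra hb; push_neg at hb
          exact hnt (by rw [hA0', Finset.mem_filter]; exact ⟨hm, ⟨hinj, a, ha0⟩, hb⟩)
        obtain ⟨b, hbn⟩ := this
        refine FF_eq_zero_of_eq_rows x y t b a ?_ ?_
        · intro hab; rw [hab, ha0] at hbn; omega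
        · intro l; rw [hbn, ha0, hyn l, pow_zero]
    rw [e1, e2, Finset.mul_sum]
    refine Finset.sum_nbij' (i := fun t => fun j => if t j = n then 0 else t j)
      (j := fun t => fun j => if t j = 0 then n else t j) ?_ ?_ ?_ ?_ ?_
    · intro t ht
      rw [hAn', Finset.mem_filter, memΩ'] at ht
      obtain ⟨hm, ⟨hinj, a, han⟩, hb0⟩ := ht
      rw [hA0', Finset.mem_filter, memΩ']
      refine ⟨?_, ⟨?_, ⟨a, ?_⟩⟩, ?_⟩
      · intro i
        show (if t i = n then 0 else t i) < n + 1
        split <;> [omega; exact hm i]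
      · intro i i' hii
        have hii' : (if t i = n then 0 else t i) = (if t i' = n then 0 else t i') := hii
        by_cases c1 : t i = n <;> by_cases c2 : t i' = n
        · exact hinj (by rw [c1, c2])
        · rw [if_pos c1, if_neg c2] at hii'
          exact absurd hii'.symm (hb0 i')
        · rw [if_neg c1, if_pos c2] at hii'
          exact absurd hii' (hb0 i)
        · rw [if_neg c1, if_neg c2] at hii'
          exact hinj hii'
      · show (if t a = n then 0 else t a) = 0
        rw [if_pos han]
      · intro b
        show (if t b = n then 0 else t b) ≠ n
        split
        · omega
        · next h => exact h
    · intro t ht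
      rw [hA0', Finset.mem_filter, memΩ'] at ht
      obtain ⟨hm, ⟨hinj, a, ha0⟩, hbn⟩ := ht
      rw [hAn', Finset.mem_filter, memΩ']
      refine ⟨?_, ⟨?_, ⟨a, ?_⟩⟩, ?_⟩
      · intro i
        show (if t i = 0 then n else t i) < n + 1
        split <;> [omega; exact hm i]
      · intro i i' hii
        have hii' : (if t i = 0 then n else t i) = (if t i' = 0 then n else t i') := hii
        by_cases c1 : t i = 0 <;> by_cases c2 : t i' = 0
        · exact hinj (by rw [c1, c2])
        · rw [if_pos c1, if_neg c2] at hii'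
          exact absurd hii'.symm (hbn i')
        · rw [if_neg c1, if_pos c2] at hii'
          exact absurd hii' (hbn i)
        · rw [if_neg c1, if_neg c2] at hii'
          exact hinj hii'
      · show (if t a = 0 then n else t a) = n
        rw [if_pos ha0]
      · intro b
        show (if t b = 0 then n else t b) ≠ 0
        split
        · omega
        · next h => exact h
    · intro t ht
      rw [hAn', Finset.mem_filter] at ht
      obtain ⟨hm, ⟨hinj, a, han⟩, hb0⟩ := ht
      funext j
      show (if (if t j = n then 0 else t j) = 0 then n else (if t j = n then 0 else t j)) = t j
      by_cases c : t j = n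
      · rw [if_pos c, if_pos rfl, c]
      · rw [if_neg c, if_neg (hb0 j)]
    · intro t ht
      rw [hA0', Finset.mem_filter] at ht
      obtain ⟨hm, ⟨hinj, a, ha0⟩, hbn⟩ := ht
      funext j
      show (if (if t j = 0 then n else t j) = n then 0 else (if t j = 0 then n else t j)) = t j
      by_cases c : t j = 0
      · rw [if_pos c, if_pos rfl, c]
      · rw [if_neg c, if_neg (hbn j)]
    · intro t ht
      rw [hAn', Finset.mem_filter] at ht
      obtain ⟨hm, ⟨hinj, a, han⟩, hb0⟩ := ht
      have hupd : (fun j => if t j = n then 0 else t j) = Function.update t a 0 := by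
        funext j
        by_cases c : j = a
        · subst c; rw [Function.update_self, if_pos han]
        · rw [Function.update_of_ne c]
          have : t j ≠ n := by
            intro he
            exact c (hinj (he.trans han.symm))
          rw [if_neg this]
      show FF x y t = γ * FF x y (fun j => if t j = n then 0 else t j)
      rw [hupd]
      exact FF_update_zero x y γ hxn hyn t a han
  -- combine
  have e1 : ∑ t ∈ A0, FF x y t = ∑ t ∈ An, FF x y t := by
    linear_combination h3 - h2 - h4
  have key : (1 - γ) * ∑ t ∈ T0, FF x y t = 0 := by
    rw [h1]
    linear_combination e1 + h5
  by_cases hγ : γ = 1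
  · -- γ = 1 : partition by position of zero
    have hpart : T0 = Finset.univ.biUnion (fun a : Fin r =>
        (Fintype.piFinset fun _ : Fin r => Finset.range n).filter
          (fun t => Function.Injective t ∧ t a = 0)) := by
      ext t
      rw [hT0, Finset.mem_filter, Finset.mem_biUnion]
      constructor
      · rintro ⟨hm, hinj, a, ha⟩
        exact ⟨a, Finset.mem_univ a, Finset.mem_filter.mpr ⟨hm, hinj, ha⟩⟩
      · rintro ⟨a, -, hma⟩
        rw [Finset.mem_filter] at hma
        exact ⟨hma.1, hma.2.1, a, hma.2.2⟩
    rw [hpart, Finset.sum_biUnion ?hd]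
    case hd =>
      intro a _ b _ hab
      refine Finset.disjoint_left.mpr ?_
      intro t hta htb
      rw [Finset.mem_filter] at hta htb
      exact absurd (hta.2.1 (hta.2.2.trans htb.2.2.symm)) hab
    refine Finset.sum_eq_zero fun a _ => ?_
    obtain ⟨j₀, hj₀, hrow⟩ := hzero hγ a
    have hsub : ∑ t ∈ (Fintype.piFinset fun _ : Fin r => Finset.range n).filter
          (fun t => Function.Injective t ∧ t a = 0), FF x y t
        = ∑ t ∈ Fintype.piFinset (fun j => if j = a then ({0} : Finset ℕ) else Finset.range n),
            FF x y t := by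
      refine Finset.sum_subset ?_ ?_
      · intro t ht
        rw [Finset.mem_filter, Fintype.mem_piFinset] at ht
        rw [Fintype.mem_piFinset]
        intro i
        by_cases c : i = a
        · subst c; rw [if_pos rfl, Finset.mem_singleton]; exact ht.2.2
        · rw [if_neg c]; exact ht.1 i
      · intro t ht hnt
        rw [Fintype.mem_piFinset] at ht
        have hta : t a = 0 := by
          have := ht a; rw [if_pos rfl, Finset.mem_singleton] at this; exact this
        have hmem : t ∈ Fintype.piFinset fun _ : Fin r => Finset.range n := by
          rw [Fintype.mem_piFinset]
          intro i
          by_cases c : i = a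
          · subst c; rw [hta, Finset.mem_range]; omega
          · have := ht i; rw [if_neg c] at this; exact this
        have hninj : ¬ Function.Injective t := by
          intro hinj
          exact hnt (Finset.mem_filter.mpr ⟨hmem, hinj, hta⟩)
        exact FF_eq_zero_of_not_inj x y t hninj
    rw [hsub]
    exact sum_Sa_eq_zero x y γ hxn hyn hγ a j₀ hj₀ hrow
  · rcases mul_eq_zero.mp key with h | h
    · exact absurd (by linear_combination -h : γ = 1) hγ
    · exact h


def ee (r : ℕ) (μ : Fin r → ℤ) (i : Fin r) : ℕ := (μ i).toNat + (r - 1 - (i : ℕ))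

lemma mem_Wk_iff {r k : ℕ} {μ : Fin r → ℤ} :
    μ ∈ Wk r k ↔ ((∀ i, 0 ≤ μ i) ∧ (∀ i, μ i ≤ k)) ∧ (∀ i j : Fin r, i ≤ j → μ j ≤ μ i)
      ∧ (∀ i : Fin r, (i : ℕ) = r - 1 → μ i = 0) := by
  unfold Wk Pbar
  rw [Finset.mem_filter, Finset.mem_filter, Finset.mem_Icc]
  constructor
  · rintro ⟨⟨⟨hle, hge⟩, hmono⟩, hlast⟩
    exact ⟨⟨fun i => hle i, fun i => hge i⟩, hmono, hlast⟩
  · rintro ⟨⟨h0, hk⟩, hmono, hlast⟩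
    exact ⟨⟨⟨fun i => h0 i, fun i => hk i⟩, hmono⟩, hlast⟩

section eefacts
variable {r k : ℕ} {μ : Fin r → ℤ}

lemma ee_strictanti (hμ : μ ∈ Wk r k) {i j : Fin r} (hij : i < j) :
    ee r μ j < ee r μ i := by
  obtain ⟨⟨h0, hk'⟩, hmono, hlast⟩ := mem_Wk_iff.mp hμ
  have h1 : μ j ≤ μ i := hmono i j hij.le
  have h2 : (μ j).toNat ≤ (μ i).toNat := Int.toNat_le_toNat h1
  have h3 : (i : ℕ) < (j : ℕ) := hij
  have h4 : (j : ℕ) < r := j.isLt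
  unfold ee
  omega

lemma ee_inj (hμ : μ ∈ Wk r k) : Function.Injective (ee r μ) := by
  intro i j hij
  rcases lt_trichotomy i j with h | h | h
  · exact absurd hij (ee_strictanti hμ h).ne'
  · exact h
  · exact absurd hij (ee_strictanti hμ h).ne

lemma ee_lt (hμ : μ ∈ Wk r k) (i : Fin r) : ee r μ i < r + k := by
  obtain ⟨⟨h0, hk'⟩, hmono, hlast⟩ := mem_Wk_iff.mp hμ
  have h1 : (μ i).toNat ≤ k := by
    have := hk' i; have := h0 i; omega
  have : (i : ℕ) < r := i.isLt
  unfold ee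
  omega

lemma ee_last (hr : 1 ≤ r) (hμ : μ ∈ Wk r k) : ee r μ ⟨r - 1, by omega⟩ = 0 := by
  obtain ⟨⟨h0, hk'⟩, hmono, hlast⟩ := mem_Wk_iff.mp hμ
  have := hlast ⟨r - 1, by omega⟩ rfl
  unfold ee
  simp [this]

lemma ee_int (hμ : μ ∈ Wk r k) (i : Fin r) :
    (ee r μ i : ℤ) = μ i + ((r : ℤ) - 1 - (i : ℕ)) := by
  obtain ⟨⟨h0, hk'⟩, hmono, hlast⟩ := mem_Wk_iff.mp hμ
  have h1 := h0 i
  have h2 : (i : ℕ) < r := i.isLt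
  unfold ee
  push_cast [Int.toNat_of_nonneg h1]
  omega

lemma ee_rev_strictMono (hμ : μ ∈ Wk r k) : StrictMono (fun j : Fin r => ee r μ j.rev) := by
  intro j j' hjj
  have : j'.rev < j.rev := by
    rw [Fin.lt_def] at hjj ⊢
    rw [Fin.val_rev, Fin.val_rev]
    have := j.isLt; have := j'.isLt
    omega
  exact ee_strictanti hμ this

end eefacts

lemma sum_detprod (r k : ℕ) (hr : 1 ≤ r) (x y : Fin r → ℂ) :
    ∑ μ ∈ Wk r k, ((Matrix.of fun i j : Fin r => x j ^ ee r μ i).det *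
        (Matrix.of fun i l : Fin r => y l ^ ee r μ i).det)
    = ∑ t ∈ (Fintype.piFinset fun _ : Fin r => Finset.range (r + k)).filter
        (fun t => Function.Injective t ∧ ∃ a, t a = 0), FF x y t := by
  classical
  have per : ∀ μ ∈ Wk r k,
      (Matrix.of fun i j : Fin r => x j ^ ee r μ i).det *
        (Matrix.of fun i l : Fin r => y l ^ ee r μ i).det
      = ∑ σ : Equiv.Perm (Fin r), FF x y (ee r μ ∘ σ) := by
    intro μ hμ
    rw [Matrix.det_apply' (Matrix.of fun i j : Fin r => x j ^ ee r μ i), Finset.sum_mul]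
    refine Finset.sum_congr rfl fun σ _ => ?_
    unfold FF
    have h2 : (Matrix.of fun i l : Fin r => y l ^ ((ee r μ ∘ σ) i))
        = (Matrix.of fun i l : Fin r => y l ^ ee r μ i).submatrix σ id := by
      ext i l
      simp [Matrix.submatrix_apply, Function.comp]
    rw [h2, Matrix.det_permute σ]
    have h3 : (∏ i, (Matrix.of fun i j : Fin r => x j ^ ee r μ i) (σ i) i)
        = ∏ j, x j ^ ((ee r μ ∘ σ) j) := by
      refine Finset.prod_congr rfl fun i _ => ?_
      simp [Function.comp]
    rw [h3]
    push_cast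
    ring
  rw [Finset.sum_congr rfl per]
  rw [← Finset.sum_product']
  refine Finset.sum_bij (i := fun p _ => ee r p.1 ∘ p.2) ?_ ?_ ?_ ?_
  · -- membership
    rintro ⟨μ, σ⟩ hp
    rw [Finset.mem_product] at hp
    have hμ := hp.1
    rw [Finset.mem_filter]
    refine ⟨?_, ?_, ?_⟩
    · rw [Fintype.mem_piFinset]
      intro i
      rw [Finset.mem_range]
      exact ee_lt hμ (σ i)
    · exact (ee_inj hμ).comp σ.injective
    · refine ⟨σ.symm ⟨r - 1, by omega⟩, ?_⟩
      simp only [Function.comp_apply, Equiv.apply_symm_apply]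
      exact ee_last hr hμ
  · -- injectivity
    rintro ⟨μ, σ⟩ hp ⟨μ', σ'⟩ hp' heq
    rw [Finset.mem_product] at hp hp'
    have hμ := hp.1; have hμ' := hp'.1
    have hcomp : ∀ j, ee r μ (σ j) = ee r μ' (σ' j) := fun j => congrFun heq j
    -- π := σ.symm.trans σ' ... we want ee μ i = ee μ' (π i) with π i = σ' (σ.symm i)
    set π : Equiv.Perm (Fin r) := σ.symm.trans σ' with hπ
    have hee : ∀ i, ee r μ i = ee r μ' (π i) := by
      intro i
      have := hcomp (σ.symm i)
      simpa [hπ] using this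
    -- ρ := rev ∘ π ∘ rev is strictMono
    set ρ : Equiv.Perm (Fin r) := (Fin.revPerm.trans π).trans Fin.revPerm with hρ
    have hρapp : ∀ j, ρ j = (π j.rev).rev := fun j => rfl
    have hρmono : StrictMono (ρ : Fin r → Fin r) := by
      intro j j' hjj
      have h1 : ee r μ j.rev < ee r μ j'.rev := ee_rev_strictMono hμ hjj
      rw [hee j.rev, hee j'.rev] at h1
      have h2 : ∀ j : Fin r, π j.rev = (ρ j).rev := by
        intro j; rw [hρapp, Fin.rev_rev]
      rw [h2 j, h2 j'] at h1
      exact (ee_rev_strictMono hμ').lt_iff_lt.mp h1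
    have hρid : ∀ j, ρ j = j := strictMono_perm_eq_id ρ ρ.bijective hρmono
    have hπid : ∀ i, π i = i := by
      intro i
      have := hρid i.rev
      rw [hρapp] at this
      have := congrArg Fin.rev this
      rwa [Fin.rev_rev, Fin.rev_rev] at this
    have hμeq : μ = μ' := by
      funext i
      have h1 : (ee r μ i : ℤ) = μ i + ((r : ℤ) - 1 - (i : ℕ)) := ee_int hμ i
      have h2 : (ee r μ' i : ℤ) = μ' i + ((r : ℤ) - 1 - (i : ℕ)) := ee_int hμ' i
      have h3 : ee r μ i = ee r μ' i := by
        have h4 := hee i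
        rwa [hπid i] at h4
      omega
    have hσeq : σ = σ' := by
      subst hμeq
      refine Equiv.ext fun j => ?_
      exact ee_inj hμ (hcomp j)
    rw [hμeq, hσeq]
  · -- surjectivity
    intro t ht
    rw [Finset.mem_filter, Fintype.mem_piFinset] at ht
    obtain ⟨hmem, hinj, a0, ha0⟩ := ht
    have hmem' : ∀ i, t i < r + k := fun i => Finset.mem_range.mp (hmem i)
    set st := Finset.image t Finset.univ with hst
    have hcard : st.card = r := by
      rw [hst, Finset.card_image_of_injective _ hinj, Finset.card_univ, Fintype.card_fin]
    set g := st.orderEmbOfFin hcard with hg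
    have hgmono : StrictMono g := (st.orderEmbOfFin hcard).strictMono
    have hgmem : ∀ j, g j ∈ st := fun j => Finset.orderEmbOfFin_mem st hcard j
    have hstlt : ∀ m ∈ st, m < r + k := by
      intro m hm
      rw [hst, Finset.mem_image] at hm
      obtain ⟨i, _, rfl⟩ := hm
      exact hmem' i
    have h0st : (0 : ℕ) ∈ st := by
      rw [hst, Finset.mem_image]; exact ⟨a0, Finset.mem_univ a0, ha0⟩
    have hg0 : g ⟨0, by omega⟩ = 0 := by
      obtain ⟨j0, hj0⟩ : ∃ j, g j = 0 := by
        have hm : (0 : ℕ) ∈ Set.range g := by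
          rw [hg, Finset.range_orderEmbOfFin]
          exact_mod_cast h0st
        exact hm
      have hle : g ⟨0, by omega⟩ ≤ g j0 := hgmono.monotone (by
        rw [Fin.le_def]; simp)
      omega
    have hg0' : ∀ j : Fin r, (j : ℕ) = 0 → g j = 0 := by
      intro j hj
      have : j = ⟨0, by omega⟩ := Fin.ext (by simp [hj])
      rw [this, hg0]
    have hlast : ∀ j : Fin r, g j + (r - 1 - (j : ℕ)) ≤ g ⟨r - 1, by omega⟩ := by
      intro j
      have hj := j.isLt
      exact sm_le hgmono (r - 1 - (j : ℕ)) j ⟨r - 1, by omega⟩ (by simp; omega)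
    have hglt : ∀ j, g j < r + k := fun j => hstlt _ (hgmem j)
    have hgge : ∀ j : Fin r, (j : ℕ) ≤ g j := by
      intro j
      have := sm_le hgmono (j : ℕ) ⟨0, by omega⟩ j (by simp)
      rw [hg0] at this
      omega
    -- define μ
    set μ : Fin r → ℤ := fun i => (g i.rev : ℤ) - ((r : ℤ) - 1 - (i : ℕ)) with hμdef
    have hrev : ∀ i : Fin r, ((i.rev : Fin r) : ℕ) = r - 1 - (i : ℕ) := by
      intro i; rw [Fin.val_rev]; have := i.isLt; omega
    have hμ0 : ∀ i, 0 ≤ μ i := by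
      intro i
      have h1 := hgge i.rev
      rw [hrev i] at h1
      have := i.isLt
      rw [hμdef]
      simp only
      push_cast
      omega
    have heeμ : ∀ i, ee r μ i = g i.rev := by
      intro i
      have h1 := hμ0 i
      have h2 := i.isLt
      have h3 : μ i = (g i.rev : ℤ) - ((r : ℤ) - 1 - (i : ℕ)) := rfl
      have h5 : (ee r μ i : ℤ) = (g i.rev : ℤ) := by
        unfold ee
        omega
      exact_mod_cast h5
    have hμWk : μ ∈ Wk r k := by
      rw [mem_Wk_iff]
      refine ⟨⟨hμ0, ?_⟩, ?_, ?_⟩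
      · intro i
        have h1 := hlast i.rev
        have h2 := hglt (⟨r - 1, by omega⟩ : Fin r)
        rw [hrev i] at h1
        have h3 := i.isLt
        rw [hμdef]; simp only
        have h4 : r - 1 - (r - 1 - (i : ℕ)) = (i : ℕ) := by omega
        rw [h4] at h1
        push_cast
        omega
      · intro i j hij
        have hij' : (i : ℕ) ≤ (j : ℕ) := hij
        have h1 := sm_le hgmono ((j : ℕ) - (i : ℕ)) j.rev i.rev
          (by rw [hrev i, hrev j]; have := j.isLt; omega)
        rw [hμdef]; simp only
        have := j.isLt
        push_cast
        omega
      · intro i hi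
        have h6 : g i.rev = 0 := hg0' i.rev (by rw [hrev i, hi]; omega)
        have h7 := hi
        rw [hμdef]; simp only
        rw [h6]
        omega
    -- define σ
    have hbij_t : Function.Bijective (fun i => (⟨t i, by
        rw [hst, Finset.mem_image]; exact ⟨i, Finset.mem_univ i, rfl⟩⟩ : st)) := by
      rw [Fintype.bijective_iff_injective_and_card]
      constructor
      · intro i i' hii
        exact hinj (congrArg Subtype.val hii)
      · rw [Fintype.card_coe, hcard, Fintype.card_fin]
    set eqt : Fin r ≃ st := Equiv.ofBijective _ hbij_t with heqt
    set eqg : Fin r ≃ st := Fin.revPerm.trans (st.orderIsoOfFin hcard).toEquiv with heqg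
    set σ : Equiv.Perm (Fin r) := eqt.trans eqg.symm with hσ
    refine ⟨⟨μ, σ⟩, Finset.mem_product.mpr ⟨hμWk, Finset.mem_univ σ⟩, ?_⟩
    funext j
    show ee r μ (σ j) = t j
    rw [heeμ]
    have h1 : eqg (σ j) = eqt j := by
      rw [hσ]; simp
    have h2 : (eqg (σ j) : ℕ) = g (σ j).rev := by
      rw [heqg]
      simp [Finset.coe_orderIsoOfFin_apply]; rfl
    have h3 : (eqt j : ℕ) = t j := rfl
    rw [← h2, h1, h3]
  · rintro ⟨μ, σ⟩ _
    rfl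


lemma matching_row (r k : ℕ) (hr : 1 ≤ r) (v v' : Fin r → ℤ)
    (hdec : ∀ i j : Fin r, i < j → v j < v i)
    (hlow : ∀ i, 0 ≤ v i) (hhigh : ∀ i, v i < (r : ℤ) + (k : ℤ))
    (hdec' : ∀ i j : Fin r, i < j → v' j < v' i)
    (hlow' : ∀ i, 0 ≤ v' i) (hhigh' : ∀ i, v' i < (r : ℤ) + (k : ℤ))
    (hnsim : ¬ sim v v') (cz : ℤ)
    (hcz : (∑ i, v' i) - (∑ i, v i) = r * cz) (a : Fin r) :
    ∃ j, j ≠ a ∧ ∀ l, ¬ ((r : ℤ) + (k : ℤ) ∣ (v j + cz - v' l)) := by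
  classical
  set n : ℤ := (r : ℤ) + (k : ℤ) with hn
  have hnpos : 0 < n := by positivity
  have vinj : Function.Injective v := by
    intro i j hij
    rcases lt_trichotomy i j with h | h | h
    · exact absurd hij (hdec i j h).ne'
    · exact h
    · exact absurd hij (hdec j i h).ne
  by_contra hcon
  push_neg at hcon
  -- hcon : ∀ j, j ≠ a → ∃ l, n ∣ v j + cz - v' l
  have hcon' : ∀ j : Fin r, ∃ l, j ≠ a → n ∣ v j + cz - v' l := by
    intro j
    by_cases hja : j = a
    · exact ⟨a, fun h => absurd hja h⟩
    · obtain ⟨l, hl⟩ := hcon j hja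
      exact ⟨l, fun _ => hl⟩
  choose L0 hL0 using hcon'
  -- injectivity of L0 on the erase
  have hL0inj : ∀ j j' : Fin r, j ≠ a → j' ≠ a → L0 j = L0 j' → j = j' := by
    intro j j' hj hj' hLL
    have d1 := hL0 j hj
    have d2 := hL0 j' hj'
    rw [hLL] at d1
    have hdvd : n ∣ v j - v j' := by
      have := dvd_sub d1 d2
      have he : v j + cz - v' (L0 j') - (v j' + cz - v' (L0 j')) = v j - v j' := by ring
      rwa [he] at this
    have hb1 := hlow j; have hb2 := hlow j'; have hb3 := hhigh j; have hb4 := hhigh j'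
    have : v j = v j' := by
      rcases hdvd with ⟨c, hc⟩
      have hc' : v j - v j' = n * c := hc
      have : c = 0 := by nlinarith [hnpos]
      rw [this, mul_zero] at hc'
      omega
    exact vinj this
  -- find a column b not hit
  set img := (Finset.univ.erase a).image L0 with himg
  have hcardimg : img.card ≤ r - 1 := by
    calc img.card ≤ (Finset.univ.erase a).card := Finset.card_image_le
      _ = r - 1 := by rw [Finset.card_erase_of_mem (Finset.mem_univ a), Finset.card_univ,
            Fintype.card_fin]
  have hb : ∃ b : Fin r, b ∉ img := by
    by_contra hc
    push_neg at hc
    have : (Finset.univ : Finset (Fin r)) ⊆ img := fun b _ => hc b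
    have := Finset.card_le_card this
    rw [Finset.card_univ, Fintype.card_fin] at this
    omega
  obtain ⟨b, hbimg⟩ := hb
  -- injOn version
  have hinjOn : Set.InjOn L0 (Finset.univ.erase a) := by
    intro j hj j' hj' hLL
    exact hL0inj j j' (Finset.ne_of_mem_erase hj) (Finset.ne_of_mem_erase hj') hLL
  have hcardimg' : img.card = r - 1 := by
    rw [himg, Finset.card_image_of_injOn hinjOn, Finset.card_erase_of_mem (Finset.mem_univ a),
      Finset.card_univ, Fintype.card_fin]
  have himgeq : img = Finset.univ.erase b := by
    refine Finset.eq_of_subset_of_card_le ?_ ?_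
    · intro m hm
      refine Finset.mem_erase.mpr ⟨?_, Finset.mem_univ m⟩
      intro hmb
      rw [hmb] at hm
      exact hbimg hm
    · rw [Finset.card_erase_of_mem (Finset.mem_univ b), Finset.card_univ, Fintype.card_fin,
        hcardimg']
  -- divisibility of the sum over erase a
  have hsumdvd : n ∣ ∑ j ∈ Finset.univ.erase a, (v j + cz - v' (L0 j)) :=
    Finset.dvd_sum fun j hj => hL0 j (Finset.ne_of_mem_erase hj)
  have hsumval : ∑ j ∈ Finset.univ.erase a, (v j + cz - v' (L0 j))
      = -(v a + cz - v' b) := by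
    rw [Finset.sum_sub_distrib, Finset.sum_add_distrib]
    have e1 : ∑ j ∈ Finset.univ.erase a, v j = (∑ j, v j) - v a := by
      rw [← Finset.add_sum_erase Finset.univ v (Finset.mem_univ a)]; ring
    have e2 : ∑ _j ∈ Finset.univ.erase a, cz = ((r : ℤ) - 1) * cz := by
      rw [Finset.sum_const, Finset.card_erase_of_mem (Finset.mem_univ a), Finset.card_univ,
        Fintype.card_fin]
      have : ((r - 1 : ℕ) : ℤ) = (r : ℤ) - 1 := by
        have : 1 ≤ r := hr; push_cast [this]; ring
      rw [nsmul_eq_mul, this]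
    have e3 : ∑ j ∈ Finset.univ.erase a, v' (L0 j) = (∑ j, v' j) - v' b := by
      rw [← Finset.sum_image (f := v') (g := L0) (fun j hj j' hj' h => hinjOn hj hj' h)]
      rw [← himg, himgeq]
      rw [← Finset.add_sum_erase Finset.univ v' (Finset.mem_univ b)]; ring
    rw [e1, e2, e3]
    have hcz' : (∑ i, v' i) - (∑ i, v i) = (r : ℤ) * cz := hcz
    ring_nf
    linarith [hcz']
  have hab : n ∣ v a + cz - v' b := by
    have := hsumval ▸ hsumdvd
    exact (dvd_neg.mp this)
  -- total matching σ
  set σ : Fin r → Fin r := fun j => if j = a then b else L0 j with hσdef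
  have hσa : σ a = b := by rw [hσdef]; simp
  have hσne : ∀ j, j ≠ a → σ j = L0 j := by
    intro j hja; rw [hσdef]; simp [hja]
  have hσdvd : ∀ j, n ∣ v j + cz - v' (σ j) := by
    intro j
    by_cases hja : j = a
    · subst hja; rw [hσa]; exact hab
    · rw [hσne j hja]; exact hL0 j hja
  have hσinj : Function.Injective σ := by
    intro j j' hjj
    by_cases h1 : j = a <;> by_cases h2 : j' = a
    · rw [h1, h2]
    · rw [h1, hσa, hσne j' h2] at hjj
      exfalso
      refine hbimg ?_
      rw [himg, Finset.mem_image]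
      exact ⟨j', Finset.mem_erase.mpr ⟨h2, Finset.mem_univ j'⟩, hjj.symm⟩
    · rw [h2, hσa, hσne j h1] at hjj
      exfalso
      refine hbimg ?_
      rw [himg, Finset.mem_image]
      exact ⟨j, Finset.mem_erase.mpr ⟨h1, Finset.mem_univ j⟩, hjj⟩
    · rw [hσne j h1, hσne j' h2] at hjj
      exact hL0inj j j' h1 h2 hjj
  have hσbij : Function.Bijective σ := Finite.injective_iff_bijective.mp hσinj
  -- extract quotients
  choose d hd using fun j => hσdvd j
  have hsum0 : ∑ j, d j = 0 := by
    have h1 : ∑ j, (v j + cz - v' (σ j)) = 0 := by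
      rw [Finset.sum_sub_distrib, Finset.sum_add_distrib]
      have e4 : ∑ j, v' (σ j) = ∑ j, v' j := hσbij.sum_comp v'
      rw [e4, Finset.sum_const, Finset.card_univ, Fintype.card_fin, nsmul_eq_mul]
      linarith [hcz]
    have h2 : ∑ j, (v j + cz - v' (σ j)) = n * ∑ j, d j := by
      rw [Finset.mul_sum]
      exact Finset.sum_congr rfl fun j _ => hd j
    rw [h2] at h1
    have := mul_eq_zero.mp h1
    rcases this with h | h
    · omega
    · exact h
  have hd0 : ∀ j, d j = 0 := by
    have hbnd : ∀ j, n * d j = v j - v' (σ j) + cz := by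
      intro j; have := hd j; omega
    by_cases hcze : 0 ≤ cz
    · have hpos : ∀ j, 0 ≤ d j := by
        intro j
        have h1 := hbnd j
        have h2 := hlow j; have h3 := hhigh' (σ j)
        nlinarith [hnpos]
      intro j
      have := (Finset.sum_eq_zero_iff_of_nonneg (fun j _ => hpos j)).mp hsum0 j
        (Finset.mem_univ j)
      exact this
    · push_neg at hcze
      have hneg : ∀ j, d j ≤ 0 := by
        intro j
        have h1 := hbnd j
        have h2 := hhigh j; have h3 := hlow' (σ j)
        nlinarith [hnpos]
      intro j
      exact (Finset.sum_eq_zero_iff_of_nonpos (fun j _ => hneg j)).mp hsum0 j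
        (Finset.mem_univ j)
  have hval : ∀ j, v' (σ j) = v j + cz := by
    intro j
    have := hd j
    rw [hd0 j, mul_zero] at this
    omega
  -- σ strictly monotone hence identity
  have hσmono : StrictMono σ := by
    intro j j' hjj
    have h1 : v j' < v j := hdec j j' hjj
    have h2 : v' (σ j') < v' (σ j) := by rw [hval j, hval j']; omega
    rcases lt_trichotomy (σ j) (σ j') with h | h | h
    · exact h
    · rw [h] at h2; omega
    · have := hdec' (σ j') (σ j) h
      omega
  have hσid := strictMono_perm_eq_id σ hσbij hσmono
  refine hnsim ⟨-cz, fun i => ?_⟩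
  have := hval i
  rw [hσid i] at this
  omega


-- ## The concrete roots of unity
def DD (r : ℕ) (v v' : Fin r → ℤ) : ℤ := (∑ i, v' i) - (∑ i, v i)

noncomputable def xx (r k : ℕ) (v v' : Fin r → ℤ) (j : Fin r) : ℂ :=
  Complex.exp (2 * (Real.pi : ℂ) * Complex.I *
    ((v j : ℂ) + (DD r v v' : ℂ) / (r : ℂ)) / ((r : ℂ) + (k : ℂ)))

noncomputable def yy (r k : ℕ) (v' : Fin r → ℤ) (l : Fin r) : ℂ :=
  Complex.exp (-(2 * (Real.pi : ℂ) * Complex.I * (v' l : ℂ) / ((r : ℂ) + (k : ℂ))))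

noncomputable def gam (r : ℕ) (v v' : Fin r → ℤ) : ℂ :=
  Complex.exp (2 * (Real.pi : ℂ) * Complex.I * (DD r v v' : ℂ) / (r : ℂ))

noncomputable def dd (r k : ℕ) (v v' : Fin r → ℤ) : ℂ :=
  Complex.exp (2 * (Real.pi : ℂ) * Complex.I * (DD r v v' : ℂ) /
    ((r : ℂ) * ((r : ℂ) + (k : ℂ))))

lemma exp_int_one (m : ℤ) : Complex.exp (2 * (Real.pi : ℂ) * Complex.I * (m : ℂ)) = 1 := by
  rw [show (2 * (Real.pi : ℂ) * Complex.I * (m : ℂ)) = (m : ℂ) * (2 * (Real.pi : ℂ) * Complex.I)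
    from by ring]
  exact Complex.exp_int_mul_two_pi_mul_I m

section concrete
variable {r k : ℕ} (v v' : Fin r → ℤ)

lemma rC_ne (hr : 1 ≤ r) : (r : ℂ) ≠ 0 := Nat.cast_ne_zero.mpr (by omega)

lemma nC_ne (hr : 1 ≤ r) (hk : 1 ≤ k) : (r : ℂ) + (k : ℂ) ≠ 0 := by
  have : ((r + k : ℕ) : ℂ) ≠ 0 := Nat.cast_ne_zero.mpr (by omega)
  push_cast at this
  exact this

lemma xx_eq (hr : 1 ≤ r) (hk : 1 ≤ k) (j : Fin r) : xx r k v v' j = dd r k v v' * zeta r k v j := by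
  unfold xx dd zeta
  rw [← Complex.exp_add]
  congr 1
  have h1 := rC_ne (r := r) hr
  have h2 := nC_ne (r := r) (k := k) hr hk
  field_simp
  ring

lemma yy_eq (l : Fin r) : yy r k v' l = (zeta r k v' l)⁻¹ := by
  unfold yy zeta
  rw [← Complex.exp_neg]

lemma xx_pow (hr : 1 ≤ r) (hk : 1 ≤ k) (j : Fin r) : xx r k v v' j ^ (r + k) = gam r v v' := by
  unfold xx gam
  rw [← Complex.exp_nat_mul]
  rw [show ((r + k : ℕ) : ℂ) * (2 * (Real.pi : ℂ) * Complex.I *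
      ((v j : ℂ) + (DD r v v' : ℂ) / (r : ℂ)) / ((r : ℂ) + (k : ℂ)))
      = 2 * (Real.pi : ℂ) * Complex.I * (v j : ℂ)
        + 2 * (Real.pi : ℂ) * Complex.I * (DD r v v' : ℂ) / (r : ℂ) from by
    have h1 := rC_ne (r := r) hr
    have h2 := nC_ne (r := r) (k := k) hr hk
    push_cast
    field_simp]
  rw [Complex.exp_add, exp_int_one (v j), one_mul]

lemma yy_pow (hr : 1 ≤ r) (hk : 1 ≤ k) (l : Fin r) : yy r k v' l ^ (r + k) = 1 := by
  unfold yy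
  rw [← Complex.exp_nat_mul]
  rw [show ((r + k : ℕ) : ℂ) * (-(2 * (Real.pi : ℂ) * Complex.I * (v' l : ℂ) /
      ((r : ℂ) + (k : ℂ)))) = 2 * (Real.pi : ℂ) * Complex.I * ((-(v' l) : ℤ) : ℂ) from by
    have h2 := nC_ne (r := r) (k := k) hr hk
    push_cast
    field_simp]
  exact exp_int_one _

lemma prod_xy (hr : 1 ≤ r) (hk : 1 ≤ k) : (∏ j, xx r k v v' j) * (∏ l, yy r k v' l) = 1 := by
  unfold xx yy
  rw [← Complex.exp_sum, ← Complex.exp_sum, ← Complex.exp_add, ← Finset.sum_add_distrib]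
  have h1 := rC_ne (r := r) hr
  have h2 := nC_ne (r := r) (k := k) hr hk
  have hs : ∑ j : Fin r, (2 * (Real.pi : ℂ) * Complex.I *
      ((v j : ℂ) + (DD r v v' : ℂ) / (r : ℂ)) / ((r : ℂ) + (k : ℂ)) +
      -(2 * (Real.pi : ℂ) * Complex.I * (v' j : ℂ) / ((r : ℂ) + (k : ℂ)))) = 0 := by
    have e : ∀ j : Fin r, (2 * (Real.pi : ℂ) * Complex.I *
        ((v j : ℂ) + (DD r v v' : ℂ) / (r : ℂ)) / ((r : ℂ) + (k : ℂ)) +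
        -(2 * (Real.pi : ℂ) * Complex.I * (v' j : ℂ) / ((r : ℂ) + (k : ℂ))))
        = (2 * (Real.pi : ℂ) * Complex.I / ((r : ℂ) + (k : ℂ))) *
          ((v j : ℂ) - (v' j : ℂ) + (DD r v v' : ℂ) / (r : ℂ)) := by
      intro j; field_simp; ring
    rw [Finset.sum_congr rfl fun j _ => e j, ← Finset.mul_sum]
    have hsum : ∑ j : Fin r, ((v j : ℂ) - (v' j : ℂ) + (DD r v v' : ℂ) / (r : ℂ)) = 0 := by
      rw [Finset.sum_add_distrib, Finset.sum_sub_distrib, Finset.sum_const, Finset.card_univ,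
        Fintype.card_fin, nsmul_eq_mul]
      have hD : (DD r v v' : ℂ) = (∑ j, (v' j : ℂ)) - (∑ j, (v j : ℂ)) := by
        unfold DD; push_cast; ring
      rw [hD]; field_simp; ring
    rw [hsum, mul_zero]
  rw [hs, Complex.exp_zero]

lemma gam_spec (hr : 1 ≤ r) (hγ : gam r v v' = 1) : ∃ cz : ℤ, DD r v v' = r * cz := by
  have := (exp_two_pi_I_int_div_eq_one_iff (n := r) (by omega) (DD r v v')).mp hγ
  obtain ⟨cz, hcz⟩ := this
  exact ⟨cz, hcz⟩

lemma hzero_full (hr : 1 ≤ r) (hk : 1 ≤ k)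
    (hdec : ∀ i j : Fin r, i < j → v j < v i)
    (hlow : ∀ i, 0 ≤ v i) (hhigh : ∀ i, v i < (r : ℤ) + (k : ℤ))
    (hdec' : ∀ i j : Fin r, i < j → v' j < v' i)
    (hlow' : ∀ i, 0 ≤ v' i) (hhigh' : ∀ i, v' i < (r : ℤ) + (k : ℤ))
    (hnsim : ¬ sim v v') :
    gam r v v' = 1 → ∀ a : Fin r, ∃ j, j ≠ a ∧ ∀ l, xx r k v v' j * yy r k v' l ≠ 1 := by
  intro hγ a
  obtain ⟨cz, hcz⟩ := gam_spec (r := r) v v' hr hγ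
  obtain ⟨j, hja, hl⟩ := matching_row r k hr v v' hdec hlow hhigh hdec' hlow' hhigh' hnsim cz
    (by unfold DD at hcz; omega) a
  refine ⟨j, hja, fun l hone => hl l ?_⟩
  have h1 := rC_ne (r := r) hr
  have h2 := nC_ne (r := r) (k := k) hr hk
  have he : xx r k v v' j * yy r k v' l
      = Complex.exp (2 * (Real.pi : ℂ) * Complex.I *
          ((v j + cz - v' l : ℤ) : ℂ) / ((r + k : ℕ) : ℂ)) := by
    unfold xx yy
    rw [← Complex.exp_add]
    congr 1
    have hD : (DD r v v' : ℂ) = (r : ℂ) * (cz : ℂ) := by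
      rw [hcz]; push_cast; ring
    rw [hD]
    push_cast
    field_simp
    ring
  rw [he] at hone
  have := (exp_two_pi_I_int_div_eq_one_iff (n := r + k) (by omega) _).mp hone
  push_cast at this ⊢
  exact_mod_cast this

end concrete

noncomputable def KK (r k : ℕ) (v v' : Fin r → ℤ) : ℂ :=
  (Complex.exp (2 * (Real.pi : ℂ) * Complex.I * ((∑ i : Fin r, (r - 1 - (i : ℕ)) : ℕ) : ℂ) *
      (∑ i, (v i : ℂ)) / ((r : ℂ) * ((r : ℂ) + (k : ℂ)))) *
    Complex.exp (-(2 * (Real.pi : ℂ) * Complex.I *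
      ((r : ℂ) * (k : ℂ) + ((∑ i : Fin r, (r - 1 - (i : ℕ)) : ℕ) : ℂ)) *
      (∑ i, (v' i : ℂ)) / ((r : ℂ) * ((r : ℂ) + (k : ℂ)))))) *
  ((Equiv.Perm.sign (Fin.revPerm : Equiv.Perm (Fin r)) : ℤ) : ℂ) *
  (∏ j, zeta r k v' j ^ (r + k - 1)) *
  (Matrix.det (Matrix.of fun i j : Fin r => zeta r k v j ^ ((r : ℤ) - 1 - (i : ℕ))))⁻¹ *
  (Matrix.det (Matrix.of fun i j : Fin r => zeta r k v' j ^ ((r : ℤ) - 1 - (i : ℕ))))⁻¹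

lemma term_eq (r k : ℕ) (hr : 1 ≤ r) (hk : 1 ≤ k) (v v' : Fin r → ℤ)
    (μ : Fin r → ℤ) (hμ : μ ∈ Wk r k) :
    Complex.exp (-(2 * (Real.pi : ℂ) * Complex.I * (∑ i, (μ i : ℂ)) * (∑ i, (v i : ℂ)) /
        ((r : ℂ) * ((r : ℂ) + (k : ℂ))))) *
      Complex.exp (-(2 * (Real.pi : ℂ) * Complex.I * (∑ i, (mustar k μ i : ℂ)) *
        (∑ i, (v' i : ℂ)) / ((r : ℂ) * ((r : ℂ) + (k : ℂ))))) *
      schur μ (zeta r k v) * schur (mustar k μ) (zeta r k v') =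
    KK r k v v' * ((Matrix.of fun i j : Fin r => xx r k v v' j ^ ee r μ i).det *
      (Matrix.of fun i l : Fin r => yy r k v' l ^ ee r μ i).det) := by
  have h1 := rC_ne (r := r) hr
  have h2 := nC_ne (r := r) (k := k) hr hk
  -- (a) first numerator in terms of natural exponents
  have ha : Matrix.det (Matrix.of fun i j : Fin r =>
        zeta r k v j ^ (μ i + ((r : ℤ) - 1 - (i : ℕ))))
      = Matrix.det (Matrix.of fun i j : Fin r => zeta r k v j ^ ee r μ i) := by
    congr 1
    ext i j
    rw [Matrix.of_apply, Matrix.of_apply,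
      show μ i + ((r : ℤ) - 1 - (i : ℕ)) = ((ee r μ i : ℕ) : ℤ) from (ee_int hμ i).symm,
      zpow_natCast]
  -- (b) the x-determinant
  have hb : (Matrix.of fun i j : Fin r => xx r k v v' j ^ ee r μ i).det
      = (∏ i, dd r k v v' ^ ee r μ i) *
        Matrix.det (Matrix.of fun i j : Fin r => zeta r k v j ^ ee r μ i) := by
    rw [← Matrix.det_mul_column (fun i => dd r k v v' ^ ee r μ i)]
    congr 1
    ext i j
    simp only [Matrix.of_apply]
    rw [xx_eq v v' hr hk j, mul_pow]
  -- (c1) exponent identity for the dual partition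
  have hc1 : ∀ i : Fin r, mustar k μ i + ((r : ℤ) - 1 - (i : ℕ))
      = (((r + k - 1) - ee r μ i.rev : ℕ) : ℤ) := by
    intro i
    have e1 : (ee r μ i.rev : ℤ) = μ i.rev + ((r : ℤ) - 1 - ((i.rev : Fin r) : ℕ)) :=
      ee_int hμ i.rev
    have e2 : ((i.rev : Fin r) : ℕ) = r - 1 - (i : ℕ) := by
      rw [Fin.val_rev]; have := i.isLt; omega
    have e3 : ee r μ i.rev < r + k := ee_lt hμ i.rev
    have e4 : (i : ℕ) < r := i.isLt
    unfold mustar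
    rw [e2] at e1
    omega
  -- (c) second numerator
  have hc : Matrix.det (Matrix.of fun i j : Fin r =>
        zeta r k v' j ^ (mustar k μ i + ((r : ℤ) - 1 - (i : ℕ))))
      = ((Equiv.Perm.sign (Fin.revPerm : Equiv.Perm (Fin r)) : ℤ) : ℂ) *
        ((∏ j, zeta r k v' j ^ (r + k - 1)) *
          (Matrix.of fun i l : Fin r => yy r k v' l ^ ee r μ i).det) := by
    have e1 : (Matrix.of fun i j : Fin r =>
          zeta r k v' j ^ (mustar k μ i + ((r : ℤ) - 1 - (i : ℕ))))
        = (Matrix.of fun i j : Fin r =>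
            zeta r k v' j ^ ((r + k - 1) - ee r μ i)).submatrix
            (Fin.revPerm : Equiv.Perm (Fin r)) id := by
      ext i j
      rw [Matrix.submatrix_apply, Matrix.of_apply, Matrix.of_apply, hc1 i, zpow_natCast]
      rfl
    rw [e1, Matrix.det_permute]
    congr 1
    rw [← Matrix.det_mul_row (fun j => zeta r k v' j ^ (r + k - 1))]
    congr 1
    ext i j
    simp only [Matrix.of_apply]
    have hz : zeta r k v' j ≠ 0 := Complex.exp_ne_zero _
    have hle : ee r μ i ≤ r + k - 1 := by have := ee_lt hμ i; omega
    rw [yy_eq, inv_pow, eq_mul_inv_iff_mul_eq₀ (pow_ne_zero _ hz), ← pow_add]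
    congr 1
    omega
  -- (d) the exponential prefactors
  have hsum1 : ((∑ i, ee r μ i : ℕ) : ℤ)
      = (∑ i, μ i) + ((∑ i : Fin r, (r - 1 - (i : ℕ)) : ℕ) : ℤ) := by
    push_cast
    rw [← Finset.sum_add_distrib]
    refine Finset.sum_congr rfl fun i _ => ?_
    have e1 := ee_int hμ i
    have e4 : (i : ℕ) < r := i.isLt
    omega
  have hsum2 : (∑ i, mustar k μ i) = (r : ℤ) * k - ∑ i, μ i := by
    unfold mustar
    rw [Finset.sum_sub_distrib, Finset.sum_const, Finset.card_univ, Fintype.card_fin,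
      nsmul_eq_mul]
    have : ∑ i : Fin r, μ i.rev = ∑ i, μ i :=
      Fintype.sum_equiv (Fin.revPerm) _ _ (fun i => rfl)
    rw [this]
  have c1 : (∑ i, (μ i : ℂ)) = ((∑ i, ee r μ i : ℕ) : ℂ)
      - ((∑ i : Fin r, (r - 1 - (i : ℕ)) : ℕ) : ℂ) := by
    have h := hsum1
    have h' : (((∑ i, ee r μ i : ℕ) : ℤ) : ℂ)
        = ((∑ i, μ i : ℤ) : ℂ) + (((∑ i : Fin r, (r - 1 - (i : ℕ)) : ℕ) : ℤ) : ℂ) := by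
      exact_mod_cast congrArg (Int.cast : ℤ → ℂ) h
    push_cast at h'
    push_cast
    linear_combination -h'
  have c2 : (∑ i, (mustar k μ i : ℂ)) = (r : ℂ) * (k : ℂ) - ∑ i, (μ i : ℂ) := by
    have h' : ((∑ i, mustar k μ i : ℤ) : ℂ)
        = (((r : ℤ) * k - ∑ i, μ i : ℤ) : ℂ) := by
      exact_mod_cast congrArg (Int.cast : ℤ → ℂ) hsum2
    push_cast at h'
    push_cast
    linear_combination h'
  have hDD : (DD r v v' : ℂ) = (∑ i, (v' i : ℂ)) - (∑ i, (v i : ℂ)) := by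
    unfold DD; push_cast; ring
  have hprodd : (∏ i, dd r k v v' ^ ee r μ i) = dd r k v v' ^ (∑ i, ee r μ i) := by
    rw [Finset.prod_pow_eq_pow_sum]
  have hd : Complex.exp (-(2 * (Real.pi : ℂ) * Complex.I * (∑ i, (μ i : ℂ)) *
        (∑ i, (v i : ℂ)) / ((r : ℂ) * ((r : ℂ) + (k : ℂ))))) *
      Complex.exp (-(2 * (Real.pi : ℂ) * Complex.I * (∑ i, (mustar k μ i : ℂ)) *
        (∑ i, (v' i : ℂ)) / ((r : ℂ) * ((r : ℂ) + (k : ℂ)))))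
      = (Complex.exp (2 * (Real.pi : ℂ) * Complex.I *
            ((∑ i : Fin r, (r - 1 - (i : ℕ)) : ℕ) : ℂ) *
            (∑ i, (v i : ℂ)) / ((r : ℂ) * ((r : ℂ) + (k : ℂ)))) *
          Complex.exp (-(2 * (Real.pi : ℂ) * Complex.I *
            ((r : ℂ) * (k : ℂ) + ((∑ i : Fin r, (r - 1 - (i : ℕ)) : ℕ) : ℂ)) *
            (∑ i, (v' i : ℂ)) / ((r : ℂ) * ((r : ℂ) + (k : ℂ)))))) *
        dd r k v v' ^ (∑ i, ee r μ i) := by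
    unfold dd
    rw [← Complex.exp_nat_mul, ← Complex.exp_add, ← Complex.exp_add, ← Complex.exp_add]
    congr 1
    rw [c2, c1, hDD]
    push_cast
    field_simp
    ring
  -- assemble everything
  unfold schur
  rw [ha, hc, hd, hb, hprodd]
  unfold KK
  ring

end Helpers

/-- if `v − v′` is not constant, the twisted pairing over `W_k` vanishes. -/
theorem sum_Wk_twisted_orthogonality (r k : ℕ) (hr : 1 ≤ r) (hk : 1 ≤ k)
    (v v' : Fin r → ℤ)
    (hdec : ∀ i j : Fin r, i < j → v j < v i)
    (hlow : ∀ i, 0 ≤ v i) (hhigh : ∀ i, v i < (r : ℤ) + (k : ℤ))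
    (hdec' : ∀ i j : Fin r, i < j → v' j < v' i)
    (hlow' : ∀ i, 0 ≤ v' i) (hhigh' : ∀ i, v' i < (r : ℤ) + (k : ℤ))
    (hnsim : ¬ sim v v') :
    ∑ μ ∈ Wk r k,
      Complex.exp (-(2 * (Real.pi : ℂ) * Complex.I * (∑ i, (μ i : ℂ)) * (∑ i, (v i : ℂ)) /
          ((r : ℂ) * ((r : ℂ) + (k : ℂ))))) *
      Complex.exp (-(2 * (Real.pi : ℂ) * Complex.I * (∑ i, (mustar k μ i : ℂ)) *
          (∑ i, (v' i : ℂ)) / ((r : ℂ) * ((r : ℂ) + (k : ℂ))))) *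
      schur μ (zeta r k v) * schur (mustar k μ) (zeta r k v') = 0 := by
  classical
  have h0 : ∀ μ ∈ Wk r k,
      Complex.exp (-(2 * (Real.pi : ℂ) * Complex.I * (∑ i, (μ i : ℂ)) * (∑ i, (v i : ℂ)) /
          ((r : ℂ) * ((r : ℂ) + (k : ℂ))))) *
        Complex.exp (-(2 * (Real.pi : ℂ) * Complex.I * (∑ i, (mustar k μ i : ℂ)) *
          (∑ i, (v' i : ℂ)) / ((r : ℂ) * ((r : ℂ) + (k : ℂ))))) *
        schur μ (zeta r k v) * schur (mustar k μ) (zeta r k v')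
      = KK r k v v' * ((Matrix.of fun i j : Fin r => xx r k v v' j ^ ee r μ i).det *
          (Matrix.of fun i l : Fin r => yy r k v' l ^ ee r μ i).det) :=
    fun μ hμ => term_eq r k hr hk v v' μ hμ
  rw [Finset.sum_congr rfl h0, ← Finset.mul_sum,
    sum_detprod r k hr (xx r k v v') (yy r k v'),
    core_sum_eq_zero r (r + k) (by omega) (xx r k v v') (yy r k v') (gam r v v')
      (fun j => xx_pow v v' hr hk j) (fun l => yy_pow v' hr hk l)
      (prod_xy v v' hr hk)
      (hzero_full v v' hr hk hdec hlow hhigh hdec' hlow' hhigh' hnsim), mul_zero]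
end VerlindePaper
end
end
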